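/- arXiv:2201.09556 — 6 statements merged into one kernel-verified Lean document; each statement's English description precedes it below -/
import Mathlib

section
/- For all finite words u and v over a finite alphabet, |PL(u) − PL(v)| ≤ PL(uv) (Saarela's inequality). -/
/-- A palindrome: a word equal to its reversal. -/
def IsPal {α : Type*} (w : List α) : Prop := w.reverse = w

/-- Palindromic length: the minimal number of palindromes whose concatenation is `w`. -/
noncomputable def PL {α : Type*} (w : List α) : ℕ :=
  sInf {k | ∃ l : List (List α), l.length = k ∧ (∀ p ∈ l, IsPal p) ∧ l.flatten = w}

namespace SaarelaAux

variable {α : Type*}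

lemma pl_set_nonempty (w : List α) :
    Set.Nonempty {k | ∃ l : List (List α), l.length = k ∧ (∀ p ∈ l, IsPal p) ∧ l.flatten = w} := by
  refine ⟨w.length, w.map (fun a => [a]), by simp, ?_, ?_⟩
  · intro p hp
    simp only [List.mem_map] at hp
    obtain ⟨a, _, rfl⟩ := hp
    rfl
  · induction w with
    | nil => rfl
    | cons a w ih => simpa using ih

lemma PL_le {w : List α} {k : ℕ} (l : List (List α)) (hlen : l.length = k)
    (hpal : ∀ p ∈ l, IsPal p) (hfl : l.flatten = w) : PL w ≤ k :=
  Nat.sInf_le ⟨l, hlen, hpal, hfl⟩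

lemma filter_flatten_eq (l : List (List α)) :
    (l.filter (fun p => !p.isEmpty)).flatten = l.flatten := by
  induction l with
  | nil => rfl
  | cons a t ih =>
    by_cases ha : a = []
    · subst ha; simpa using ih
    · rw [List.filter_cons_of_pos (by simp [ha])]
      simp only [List.flatten_cons]
      rw [ih]

lemma PL_spec (w : List α) :
    ∃ l : List (List α), l.length = PL w ∧ (∀ p ∈ l, IsPal p) ∧ (∀ p ∈ l, p ≠ []) ∧
      l.flatten = w := by
  obtain ⟨l, hlen0, hpal, hfl⟩ := Nat.sInf_mem (pl_set_nonempty w)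
  have hlen : l.length = PL w := hlen0
  refine ⟨l.filter (fun p => !p.isEmpty), ?_, ?_, ?_, ?_⟩
  · have h1 : (l.filter (fun p => !p.isEmpty)).length ≤ l.length := List.length_filter_le _ _
    have h2 : PL w ≤ (l.filter (fun p => !p.isEmpty)).length :=
      PL_le _ rfl (fun p hp => hpal p (List.mem_of_mem_filter hp))
        (by rw [filter_flatten_eq, hfl])
    omega
  · exact fun p hp => hpal p (List.mem_of_mem_filter hp)
  · intro p hp
    have := List.of_mem_filter hp
    simpa using this
  · rw [filter_flatten_eq, hfl]

/-- Conjugacy: `x ++ z = z ++ y` implies `x = a ++ b`, `y = b ++ a`. -/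
lemma conj (x y : List α) : ∀ n (z : List α), z.length ≤ n → x ++ z = z ++ y →
    ∃ a b : List α, x = a ++ b ∧ y = b ++ a := by
  intro n
  induction n with
  | zero =>
    intro z hz h
    have : z = [] := List.eq_nil_of_length_eq_zero (Nat.le_zero.mp hz)
    subst this
    simp only [List.append_nil, List.nil_append] at h
    exact ⟨x, [], by simp, by simp [h]⟩
  | succ n ih =>
    intro z hz h
    rcases List.append_eq_append_iff.mp h with ⟨a', h1, h2⟩ | ⟨c', h1, h2⟩
    · -- z = x ++ a', z = a' ++ y
      by_cases hx : x = []
      · subst hx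
        simp only [List.nil_append] at h1
        subst h1
        have hy : y = [] := by
          have hl := congrArg List.length h2
          simp only [List.length_append] at hl
          exact List.eq_nil_of_length_eq_zero (by omega)
        exact ⟨[], [], rfl, by simp [hy]⟩
      · have ha' : a'.length ≤ n := by
          have hzl := congrArg List.length h1
          simp only [List.length_append] at hzl
          have : 0 < x.length := List.length_pos_iff.mpr hx
          omega
        exact ih a' ha' (by rw [h1] at h2; exact h2)
    · exact ⟨z, c', h1, h2⟩

lemma conj' {x y z : List α} (h : x ++ z = z ++ y) :
    ∃ a b : List α, x = a ++ b ∧ y = b ++ a :=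
  conj x y z.length z le_rfl h

/-- If `p` and `t ++ p` are palindromes then `t` is a product of two palindromes. -/
lemma pal_split {t p : List α} (hp : IsPal p) (htp : IsPal (t ++ p)) :
    ∃ a b : List α, IsPal a ∧ IsPal b ∧ t = a ++ b := by
  have h : t ++ p = p ++ t.reverse := by
    conv_lhs => rw [← htp]
    rw [List.reverse_append, hp]
  obtain ⟨a, b, h1, h2⟩ := conj' h
  have hrev : b.reverse ++ a.reverse = b ++ a := by
    rw [← List.reverse_append, ← h1, h2]
  have hba : b.reverse = b ∧ a.reverse = a :=
    List.append_inj hrev (by simp)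
  exact ⟨a, b, hba.2, hba.1, h1⟩

/-- Key lemma (Saarela): for a palindrome `p`, `PL v ≤ PL (v ++ p) + 1`. -/
lemma key : ∀ n (v p : List α), (v ++ p).length ≤ n → IsPal p →
    PL v ≤ PL (v ++ p) + 1 := by
  intro n
  induction n with
  | zero =>
    intro v p h _
    simp only [List.length_append, Nat.le_zero] at h
    have hv : v = [] := List.eq_nil_of_length_eq_zero (by omega)
    have hp : p = [] := List.eq_nil_of_length_eq_zero (by omega)
    subst hv; subst hp; simp
  | succ n ih =>
    intro v p hlen hp
    by_cases hpe : p = []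
    · subst hpe; simp
    obtain ⟨l, hl, hlpal, hlne, hlfl⟩ := PL_spec (v ++ p)
    have hlnil : l ≠ [] := by
      intro h
      subst h
      simp only [List.flatten_nil] at hlfl
      exact hpe (List.append_eq_nil_iff.mp hlfl.symm).2
    obtain (h | ⟨l₁, q, rfl⟩) := l.eq_nil_or_concat
    · exact absurd h hlnil
    have hfl : l₁.flatten ++ q = v ++ p := by simpa using hlfl
    have hqpal : IsPal q := hlpal q (by simp)
    have hqne : q ≠ [] := hlne q (by simp)
    have hk : l₁.length + 1 = PL (v ++ p) := by simpa using hl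
    rcases List.append_eq_append_iff.mp hfl with ⟨t, hv, hq⟩ | ⟨w, hL, hpw⟩
    · -- v = l₁.flatten ++ t, q = t ++ p
      obtain ⟨a, b, hapal, hbpal, ht⟩ := pal_split hp (show IsPal (t ++ p) by rw [← hq]; exact hqpal)
      have h2 : PL v ≤ l₁.length + 2 := by
        refine PL_le (l₁ ++ [a, b]) (by simp) ?_ ?_
        · intro r hr
          rcases List.mem_append.mp hr with h | h
          · exact hlpal r (by simp [h])
          · simp only [List.mem_cons, List.mem_singleton, List.not_mem_nil, or_false] at h
            rcases h with rfl | rfl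
            · exact hapal
            · exact hbpal
        · rw [List.flatten_append, hv, ht]
          simp
      omega
    · -- l₁.flatten = v ++ w, p = w ++ q
      obtain ⟨a, b, hapal, hbpal, hw⟩ :=
        pal_split hqpal (show IsPal (w ++ q) by rw [← hpw]; exact hp)
      have hPLab : PL ((v ++ a) ++ b) ≤ l₁.length := by
        refine PL_le l₁ rfl (fun r hr => hlpal r (by simp [hr])) ?_
        rw [hL, hw, List.append_assoc]
      have hql : 0 < q.length := List.length_pos_iff.mpr hqne
      have hlens : v.length + p.length ≤ n + 1 := by
        simpa [List.length_append] using hlen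
      have hpl : p.length = w.length + q.length := by
        rw [hpw]; simp
      have hwl : w.length = a.length + b.length := by
        rw [hw]; simp
      have hlen1 : ((v ++ a) ++ b).length ≤ n := by
        simp only [List.length_append]
        omega
      have h1 : PL (v ++ a) ≤ PL ((v ++ a) ++ b) + 1 := ih (v ++ a) b hlen1 hbpal
      have hlen2 : (v ++ a).length ≤ n := by
        simp only [List.length_append]
        omega
      have h2 : PL v ≤ PL (v ++ a) + 1 := ih v a hlen2 hapal
      omega

lemma key' (v p : List α) (hp : IsPal p) : PL v ≤ PL (v ++ p) + 1 :=
  key (v ++ p).length v p le_rfl hp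

lemma chain (v : List α) (l : List (List α)) :
    (∀ p ∈ l, IsPal p) → PL v ≤ PL (v ++ l.flatten) + l.length := by
  induction l using List.reverseRecOn with
  | nil => intro _; simp
  | append_singleton l₁ q ih =>
    intro hlpal
    have hq : IsPal q := hlpal q (by simp)
    have ih' := ih (fun r hr => hlpal r (by simp [hr]))
    have h1 : PL (v ++ l₁.flatten) ≤ PL ((v ++ l₁.flatten) ++ q) + 1 :=
      key' _ _ hq
    have h2 : (v ++ l₁.flatten) ++ q = v ++ (l₁ ++ [q]).flatten := by
      simp [List.append_assoc]
    rw [h2] at h1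
    simp only [List.length_append, List.length_singleton]
    omega

lemma PL_le_append (v w : List α) : PL v ≤ PL (v ++ w) + PL w := by
  obtain ⟨l, hl, hlpal, -, hlfl⟩ := PL_spec w
  have h := chain v l hlpal
  rw [hl, hlfl] at h
  exact h

lemma PL_reverse_le (w : List α) : PL w.reverse ≤ PL w := by
  obtain ⟨l, hl, hlpal, _, hlfl⟩ := PL_spec w
  refine PL_le ((l.map List.reverse).reverse) (by simp [hl]) ?_ ?_
  · intro r hr
    simp only [List.mem_reverse, List.mem_map] at hr
    obtain ⟨s, hs, rfl⟩ := hr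
    have h := hlpal s hs
    unfold IsPal at h ⊢
    simp [h]
  · rw [← hlfl, ← List.reverse_flatten]

lemma PL_reverse (w : List α) : PL w.reverse = PL w :=
  le_antisymm (PL_reverse_le w) (by simpa using PL_reverse_le w.reverse)

end SaarelaAux

/-- Saarela's inequality: |PL(u) − PL(v)| ≤ PL(uv). -/
theorem saarela_inequality {α : Type*} (u v : List α) :
    |(PL u : ℤ) - (PL v : ℤ)| ≤ (PL (u ++ v) : ℤ) := by
  have h1 : PL u ≤ PL (u ++ v) + PL v := SaarelaAux.PL_le_append u v
  have h2 : PL v ≤ PL (u ++ v) + PL u := by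
    have := SaarelaAux.PL_le_append v.reverse u.reverse
    rw [SaarelaAux.PL_reverse, ← List.reverse_append, SaarelaAux.PL_reverse,
      SaarelaAux.PL_reverse] at this
    exact this
  rw [abs_sub_le_iff]
  constructor <;> omega
end

section
/- For every k ≥ 0, the prefix of length 3^k of the Sierpinski word is a palindrome; more precisely, φ^k(a) = φ^(k−1)(a) · b^(3^(k−1)) · φ^(k−1)(a) for k ≥ 1, and φ^k(a) is a palindrome for all k. -/
/-- The morphism φ : a → aba, b → bbb, with a = false, b = true. -/
def phi (w : List Bool) : List Bool :=
  w.flatMap fun c => if c then [true, true, true] else [false, true, false]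

/-- The Sierpinski word, fixed point of φ starting with a: its (n+1)-st letter. -/
def sW (n : ℕ) : Bool := (phi^[n+1] [false]).getD n true

/-- The prefix s[1..n] of the Sierpinski word. -/
def sPrefix (n : ℕ) : List Bool := (List.range n).map sW

/-- qⱼ(n) = PL(bʲ s[1..n]). -/
noncomputable def qj (j n : ℕ) : ℕ := PL (List.replicate j true ++ sPrefix n)

/-- q(n) = min over j of qⱼ(n). -/
noncomputable def qS (n : ℕ) : ℕ := sInf (Set.range fun j => qj j n)

/-- p(n) = PL(s[1..n]), the prefix palindromic length of the Sierpinski word. -/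
noncomputable def pS (n : ℕ) : ℕ := PL (sPrefix n)

lemma phi_append (u v : List Bool) : phi (u ++ v) = phi u ++ phi v := by
  simp [phi]

lemma phi_iter_append (k : ℕ) (u v : List Bool) :
    phi^[k] (u ++ v) = phi^[k] u ++ phi^[k] v := by
  induction k generalizing u v with
  | zero => simp
  | succ k ih => simp [Function.iterate_succ_apply, phi_append, ih]

lemma phi_replicate (n : ℕ) : phi (List.replicate n true) = List.replicate (3*n) true := by
  induction n with
  | zero => simp [phi]
  | succ n ih =>
    rw [List.replicate_succ, show phi (true :: List.replicate n true) = phi ([true] ++ List.replicate n true) from rfl, phi_append, ih]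
    simp [phi, List.replicate, Nat.mul_succ, Nat.mul_add]

lemma phi_iter_true (k : ℕ) : phi^[k] [true] = List.replicate (3^k) true := by
  induction k with
  | zero => simp
  | succ k ih =>
    rw [Function.iterate_succ_apply', ih, phi_replicate, pow_succ]
    ring_nf

lemma phi_iter_rec (k : ℕ) :
    phi^[k+1] [false] =
      phi^[k] [false] ++ List.replicate (3^k) true ++ phi^[k] [false] := by
  rw [Function.iterate_succ_apply,
    show phi [false] = [false] ++ [true] ++ [false] from rfl,
    phi_iter_append, phi_iter_append, phi_iter_true]

lemma phi_iter_len (k : ℕ) : (phi^[k] [false]).length = 3^k := by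
  induction k with
  | zero => simp
  | succ k ih => rw [phi_iter_rec]; simp [ih, pow_succ]; ring

lemma phi_iter_pal (k : ℕ) : (phi^[k] [false]).reverse = phi^[k] [false] := by
  induction k with
  | zero => simp
  | succ k ih =>
    rw [phi_iter_rec]
    simp [List.reverse_append, ih, List.append_assoc]

lemma phi_iter_prefix {k m : ℕ} (h : k ≤ m) :
    phi^[k] [false] <+: phi^[m] [false] := by
  induction m with
  | zero => simp [Nat.le_zero.mp h]
  | succ m ih =>
    rcases Nat.le_succ_iff.mp h with h' | h'
    · exact (ih h').trans ⟨List.replicate (3^m) true ++ phi^[m] [false], by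
        rw [phi_iter_rec]; simp⟩
    · simp [h']

lemma sPrefix_eq (k : ℕ) : sPrefix (3^k) = phi^[k] [false] := by
  apply List.ext_getElem
  · simp [sPrefix, phi_iter_len]
  · intro n h1 h2
    simp only [sPrefix, List.getElem_map, List.getElem_range]
    rw [phi_iter_len] at h2
    have h3 : n < (phi^[n+1] [false]).length := by
      rw [phi_iter_len]
      calc n < 3^n := Nat.lt_pow_self (by norm_num : 1 < 3)
        _ ≤ 3^(n+1) := Nat.pow_le_pow_right (by norm_num) (Nat.le_succ n)
    have h2' : n < (phi^[k] [false]).length := by rwa [phi_iter_len]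
    rw [sW, List.getD_eq_getElem _ _ h3]
    rw [(phi_iter_prefix (le_max_left (n+1) k)).getElem h3,
        (phi_iter_prefix (le_max_right (n+1) k)).getElem h2']

/-- φᵏ(a) = φᵏ⁻¹(a) · b^(3^(k−1)) · φᵏ⁻¹(a) for k ≥ 1, φᵏ(a) is a palindrome for all k,
and the prefix of length 3ᵏ of the Sierpinski word is a palindrome. -/
theorem phi_iterate_palindrome :
    (∀ k : ℕ, 1 ≤ k →
      phi^[k] [false] =
        phi^[k-1] [false] ++ List.replicate (3 ^ (k-1)) true ++ phi^[k-1] [false]) ∧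
    (∀ k : ℕ, IsPal (phi^[k] [false])) ∧
    (∀ k : ℕ, IsPal (sPrefix (3 ^ k))) := by
  refine ⟨fun k hk => ?_, fun k => phi_iter_pal k, fun k => ?_⟩
  · cases k with
    | zero => omega
    | succ k' => simpa using phi_iter_rec k'
  · rw [IsPal, sPrefix_eq]; exact phi_iter_pal k
end

section
/- The function q satisfies: q(0) = 0; q(n) = 1 whenever n = 1 or 3^k ≤ n ≤ 2·3^k for some k; and for 2·3^k < n ≤ 3^(k+1), q(n) = min(1 + q(n − 2·3^k), 1 + q(3^(k+1) − n)). -/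
-- #### auxiliary development

def sFactor (x y : ℕ) : List Bool := (List.range (y - x)).map (fun i => sW (x + i))

def SymB (x y : ℕ) : Prop := ∀ i, x ≤ i → i < y → sW i = sW (x + y - 1 - i)




def hasOne (n : ℕ) : Bool :=
  if n = 0 then false else (n % 3 == 1) || hasOne (n / 3)
decreasing_by exact Nat.div_lt_self (Nat.pos_of_ne_zero (by assumption)) (by norm_num)

lemma hasOne_unfold (n : ℕ) : hasOne n = ((n % 3 == 1) || hasOne (n / 3)) := by
  rcases eq_or_ne n 0 with rfl | h
  · rw [hasOne]; simp [hasOne]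
  · rw [hasOne]; simp [h]

lemma phi_length (w : List Bool) : (phi w).length = 3 * w.length := by
  induction w with
  | nil => simp [phi]
  | cons c w ih =>
    simp only [phi, List.flatMap_cons, List.length_append] at *
    cases c <;> simp_all <;> ring

lemma phi_getD (w : List Bool) (i : ℕ) (h : i < 3 * w.length) :
    (phi w).getD i true = (w.getD (i/3) true || (i % 3 == 1)) := by
  induction w generalizing i with
  | nil => simp at h
  | cons c w ih =>
    simp only [phi, List.flatMap_cons]
    by_cases hi : i < 3
    · interval_cases i <;> cases c <;> simp [List.getD]
    · push_neg at hi
      have h3 : (i - 3) < 3 * w.length := by simp at h; omega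
      have e1 : ((if c = true then [true, true, true] else [false, true, false]) : List Bool).length = 3 := by
        cases c <;> simp
      rw [List.getD_append_right _ _ _ _ (by rw [e1]; omega), e1]
      have := ih (i - 3) h3
      simp only [phi] at this
      rw [this]
      have e2 : (i-3)/3 = i/3 - 1 := by omega
      have e3 : (i-3)%3 = i%3 := by omega
      have e4 : 1 ≤ i / 3 := by omega
      rw [e2, e3]
      congr 1
      have : i / 3 - 1 + 1 = i / 3 := by omega
      rw [← this]
      simp [List.getD]

lemma iter_length (m : ℕ) : (phi^[m] [false]).length = 3 ^ m := by
  induction m with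
  | zero => simp
  | succ m ih => rw [Function.iterate_succ_apply', phi_length, ih]; ring

lemma iter_getD (m i : ℕ) (h : i < 3 ^ m) : (phi^[m] [false]).getD i true = hasOne i := by
  induction m generalizing i with
  | zero =>
    interval_cases i
    simp [hasOne]
  | succ m ih =>
    rw [Function.iterate_succ_apply']
    rw [phi_getD _ _ (by rw [iter_length]; omega)]
    have hd : i / 3 < 3 ^ m := by
      have : i < 3 * 3 ^ m := by rw [pow_succ] at h; omega
      omega
    rw [ih _ hd, hasOne_unfold i, Bool.or_comm]

lemma sW_eq (n : ℕ) : sW n = hasOne n := by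
  have h : n < 3 ^ (n+1) := by
    calc n < n + 1 := by omega
    _ ≤ 3 ^ (n+1) := Nat.le_of_lt (Nat.lt_pow_self (by norm_num))
  exact iter_getD (n+1) n h



lemma hasOne_zero : hasOne 0 = false := by rw [hasOne]; simp

lemma h_S1 : ∀ k i, i < 3 ^ k → hasOne (2 * 3 ^ k + i) = hasOne i := by
  intro k
  induction k with
  | zero =>
    intro i hi
    interval_cases i
    have : 2 * 3 ^ 0 + 0 = 2 := by norm_num
    rw [this, hasOne_unfold 2]
    simp [hasOne_zero]
  | succ k ih =>
    intro i hi
    rw [hasOne_unfold (2 * 3 ^ (k+1) + i), hasOne_unfold i]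
    have e1 : (2 * 3 ^ (k+1) + i) % 3 = i % 3 := by
      have : 2 * 3 ^ (k+1) + i = (2 * 3 ^ k) * 3 + i := by ring_nf
      omega
    have e2 : (2 * 3 ^ (k+1) + i) / 3 = 2 * 3 ^ k + i / 3 := by
      have : 2 * 3 ^ (k+1) + i = (2 * 3 ^ k) * 3 + i := by ring_nf
      omega
    have hd : i / 3 < 3 ^ k := by
      have : i < 3 ^ k * 3 := by rw [pow_succ] at hi; omega
      omega
    rw [e1, e2, ih (i/3) hd]

lemma h_S2 : ∀ k i, 3 ^ k ≤ i → i < 2 * 3 ^ k → hasOne i = true := by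
  intro k
  induction k with
  | zero => intro i h1 h2; interval_cases i; rw [hasOne_unfold]; norm_num
  | succ k ih =>
    intro i h1 h2
    rw [hasOne_unfold i]
    have : hasOne (i / 3) = true := by
      apply ih
      · have : 3 ^ (k+1) = 3 ^ k * 3 := by ring
        omega
      · have : 2 * 3 ^ (k+1) = (2 * 3 ^ k) * 3 := by ring
        omega
    simp [this]

lemma h_S3 : ∀ k i, i < 3 ^ k → hasOne i = hasOne (3 ^ k - 1 - i) := by
  intro k
  induction k with
  | zero => intro i hi; interval_cases i; rfl
  | succ k ih =>
    intro i hi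
    have h3 : (0:ℕ) < 3 ^ k := (by positivity)
    have hp : 3 ^ (k+1) = 3 ^ k * 3 := by ring
    set q := i / 3 with hq
    set r := i % 3 with hr
    have hqlt : q < 3 ^ k := by omega
    have hiq : i = 3 * q + r := by omega
    have hrlt : r < 3 := by omega
    have e1 : 3 ^ (k+1) - 1 - i = 3 * (3 ^ k - 1 - q) + (2 - r) := by omega
    rw [hasOne_unfold i, hasOne_unfold (3 ^ (k+1) - 1 - i)]
    have e2 : (3 ^ (k+1) - 1 - i) % 3 = 2 - r := by omega
    have e3 : (3 ^ (k+1) - 1 - i) / 3 = 3 ^ k - 1 - q := by omega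
    rw [e2, e3, ← ih q hqlt]
    have : i % 3 = r := hr.symm
    rw [this]
    congr 1
    interval_cases r <;> rfl

lemma sw_zero : sW 0 = false := by rw [sW_eq]; exact hasOne_zero



lemma s_S1 : ∀ k i : ℕ, i < 3 ^ k → sW (2 * 3 ^ k + i) = sW i := by
  intro k i h; rw [sW_eq, sW_eq]; exact h_S1 k i h

lemma s_S2 : ∀ k i : ℕ, 3 ^ k ≤ i → i < 2 * 3 ^ k → sW i = true := by
  intro k i h1 h2; rw [sW_eq]; exact h_S2 k i h1 h2

lemma s_S3 : ∀ k i : ℕ, i < 3 ^ k → sW i = sW (3 ^ k - 1 - i) := by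
  intro k i h; rw [sW_eq, sW_eq]; exact h_S3 k i h


noncomputable def f (n : ℕ) : ℕ :=
  if n = 0 then 0
  else if n ≤ 2 * 3 ^ Nat.log 3 n then 1
  else min (1 + f (n - 2 * 3 ^ Nat.log 3 n)) (1 + f (3 ^ (Nat.log 3 n + 1) - n))
termination_by n
decreasing_by
  · have h1 : (0:ℕ) < 3 ^ Nat.log 3 n := (by positivity)
    omega
  · have h1 : (0:ℕ) < 3 ^ Nat.log 3 n := (by positivity)
    have h2 : 3 ^ (Nat.log 3 n + 1) = 3 * 3 ^ Nat.log 3 n := by ring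
    omega

lemma f_zero : f 0 = 0 := by rw [f]; simp

lemma f_pos (n : ℕ) (h : 1 ≤ n) : 1 ≤ f n := by
  rw [f]
  have : ¬ (n = 0) := by omega
  simp only [this, if_false]
  split <;> omega

lemma log_eq (k n : ℕ) (h1 : 3 ^ k ≤ n) (h2 : n < 3 ^ (k+1)) : Nat.log 3 n = k :=
  Nat.log_eq_of_pow_le_of_lt_pow h1 h2

lemma f_F1 (k n : ℕ) (h1 : 3 ^ k ≤ n) (h2 : n ≤ 2 * 3 ^ k) : f n = 1 := by
  have h3 : (0:ℕ) < 3 ^ k := (by positivity)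
  have hl : Nat.log 3 n = k := by
    apply log_eq k n h1
    have : 3 ^ (k+1) = 3 * 3 ^ k := by ring
    omega
  rw [f]
  have h0 : ¬ (n = 0) := by omega
  rw [hl]
  simp only [h0, if_false, h2, if_true]

lemma f_F2open (k n : ℕ) (h1 : 2 * 3 ^ k < n) (h2 : n < 3 ^ (k+1)) :
    f n = min (1 + f (n - 2 * 3 ^ k)) (1 + f (3 ^ (k+1) - n)) := by
  have hl : Nat.log 3 n = k := by
    apply log_eq k n _ h2
    omega
  rw [f]
  have h0 : ¬ (n = 0) := by
    have : (0:ℕ) < 3 ^ k := (by positivity)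
    omega
  rw [hl]
  simp only [h0, if_false]
  have : ¬ (n ≤ 2 * 3 ^ k) := by omega
  simp only [this, if_false]

lemma f_F2 (k n : ℕ) (h1 : 2 * 3 ^ k ≤ n) (h2 : n ≤ 3 ^ (k+1)) :
    f n = min (1 + f (n - 2 * 3 ^ k)) (1 + f (3 ^ (k+1) - n)) := by
  have h3 : (0:ℕ) < 3 ^ k := (by positivity)
  have hp : 3 ^ (k+1) = 3 * 3 ^ k := by ring
  rcases eq_or_lt_of_le h1 with he | h1'
  · rw [← he]
    have e1 : 2 * 3 ^ k - 2 * 3 ^ k = 0 := by omega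
    have e2 : 3 ^ (k+1) - 2 * 3 ^ k = 3 ^ k := by omega
    rw [e1, e2, f_zero, f_F1 k (3^k) (le_refl _) (by omega), f_F1 k (2*3^k) (by omega) (le_refl _)]
    simp
  rcases eq_or_lt_of_le h2 with he | h2'
  · rw [he]
    have e1 : 3 ^ (k+1) - 2 * 3 ^ k = 3 ^ k := by omega
    have e2 : 3 ^ (k+1) - 3 ^ (k+1) = 0 := by omega
    rw [e1, e2, f_zero, f_F1 k (3^k) (le_refl _) (by omega), f_F1 (k+1) (3^(k+1)) (le_refl _) (by omega)]
    simp
  exact f_F2open k n h1' h2'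

lemma sw_pow_sub_one (k : ℕ) : sW (3 ^ k - 1) = false := by
  have h3 : (0:ℕ) < 3 ^ k := (by positivity)
  have := s_S3 k 0 h3
  simp at this
  rw [← this, sw_zero]

lemma sw_two_pow (k : ℕ) : sW (2 * 3 ^ k) = false := by
  have h3 : (0:ℕ) < 3 ^ k := (by positivity)
  have := s_S1 k 0 h3
  simp at this
  rw [this, sw_zero]

lemma lem_M : ∀ k m : ℕ, m ≤ 3 ^ k → f (3 ^ k - m) ≤ 1 + f m := by
  intro k
  induction k with
  | zero =>
    intro m hm
    interval_cases m
    · rw [f_F1 0 (3^0-0) (by norm_num) (by norm_num)]; omega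
    · simp [f_zero]
  | succ k ih =>
    intro m hm
    have h3 : (0:ℕ) < 3 ^ k := (by positivity)
    have hp : 3 ^ (k+1) = 3 * 3 ^ k := by ring
    set B := 3 ^ k with hB
    rcases eq_or_lt_of_le hm with he | hm'
    · rw [he]; simp [f_zero]
    by_cases hc1 : B ≤ m ∧ m ≤ 2 * B
    · have : f (3 ^ (k+1) - m) = 1 := f_F1 k _ (by omega) (by omega)
      rw [this]
      omega
    by_cases hc2 : m < B
    · -- t > 2*B
      have hF2 := f_F2 k (3 ^ (k+1) - m) (by omega) (by omega)
      rw [hF2]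
      have e : 3 ^ (k+1) - (3 ^ (k+1) - m) = m := by omega
      rw [e]
      exact le_trans (min_le_right _ _) (le_refl _)
    · -- m > 2*B, t < B
      have hm2 : 2 * B < m := by omega
      have hF2 := f_F2 k m (by omega) (by omega)
      set t := 3 ^ (k+1) - m with ht
      have e1 : m - 2 * B = B - t := by omega
      rw [e1] at hF2
      have hih := ih (B - t) (by omega)
      have e3 : B - (B - t) = t := by omega
      rw [e3] at hih
      rcases min_cases (1 + f (B - t)) (1 + f t) with ⟨hmin, _⟩ | ⟨hmin, _⟩ <;> omega

lemma lem_BR : ∀ N x y : ℕ, x ≤ y → y ≤ 3 ^ N →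
    (∀ i, x ≤ i → i < y → sW i = true) → f x = f y := by
  intro N
  induction N with
  | zero =>
    intro x y hxy hy hall
    interval_cases y
    · interval_cases x; rfl
    · interval_cases x
      · exact absurd (hall 0 (by omega) (by omega)) (by rw [sw_zero]; simp)
      · rfl
  | succ k ih =>
    intro x y hxy hy hall
    have h3 : (0:ℕ) < 3 ^ k := (by positivity)
    have hp : 3 ^ (k+1) = 3 * 3 ^ k := by ring
    set B := 3 ^ k with hB
    by_cases hy1 : y ≤ B
    · exact ih x y hxy hy1 hall
    by_cases hx1 : x < B
    · exfalso
      have : sW (B - 1) = true := hall (B-1) (by omega) (by omega)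
      rw [sw_pow_sub_one k] at this
      exact absurd this (by simp)
    by_cases hy2 : y ≤ 2 * B
    · rw [f_F1 k x (by omega) (by omega), f_F1 k y (by omega) (by omega)]
    by_cases hx2 : x < 2 * B
    · exfalso
      have : sW (2 * B) = true := hall (2*B) (by omega) (by omega)
      rw [sw_two_pow k] at this
      exact absurd this (by simp)
    · -- x, y both in [2B, 3B]
      rw [f_F2 k x (by omega) (by omega), f_F2 k y (by omega) (by omega)]
      have ih1 : f (x - 2*B) = f (y - 2*B) := by
        apply ih _ _ (by omega) (by omega)
        intro i hi1 hi2
        have : sW (2 * B + i) = sW i := s_S1 k i (by omega)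
        rw [← this]
        exact hall _ (by omega) (by omega)
      have ih2 : f (3 ^ (k+1) - y) = f (3 ^ (k+1) - x) := by
        apply ih _ _ (by omega) (by omega)
        intro i hi1 hi2
        have : sW i = sW (3 ^ (k+1) - 1 - i) := s_S3 (k+1) i (by omega)
        rw [this]
        exact hall _ (by omega) (by omega)
      rw [ih1, ih2]



lemma sFactor_length (x y : ℕ) : (sFactor x y).length = y - x := by simp [sFactor]

lemma sFactor_getElem (x y i : ℕ) (h : i < (sFactor x y).length) :
    (sFactor x y)[i] = sW (x + i) := by simp [sFactor]

lemma sPrefix_eq_s6 (n : ℕ) : sPrefix n = sFactor 0 n := by simp [sPrefix, sFactor]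

lemma sPrefix_length (n : ℕ) : (sPrefix n).length = n := by simp [sPrefix]

lemma sPrefix_getElem (n i : ℕ) (h : i < (sPrefix n).length) : (sPrefix n)[i] = sW i := by
  simp [sPrefix]

-- generic palindrome characterization
lemma getElem_idx_congr {α : Type*} (l : List α) (i j : ℕ) (hi : i < l.length)
    (hj : j < l.length) (e : i = j) : l[i] = l[j] := by subst e; rfl

lemma isPal_iff {α : Type*} (w : List α) :
    IsPal w ↔ ∀ i j (hi : i < w.length) (hj : j < w.length), i + j + 1 = w.length → w[i] = w[j] := by
  constructor
  · intro hp i j hi hj hij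
    have hj' : j < w.reverse.length := by simpa using hj
    have h1 : w.reverse[j] = w[w.length - 1 - j]'(by omega) := List.getElem_reverse hj'
    have h2 : w.reverse[j]'hj' = w[j]'hj := List.getElem_of_eq hp hj'
    have h3 : w[w.length - 1 - j]'(by omega) = w[i]'hi :=
      getElem_idx_congr _ _ _ _ hi (by omega)
    rw [← h2, h1, h3]
  · intro h
    apply List.ext_getElem (by simp)
    intro i h1 h2
    rw [List.getElem_reverse]
    exact h _ _ _ h2 (by simp at h1; omega)

lemma sFactor_append (x y z : ℕ) (h1 : x ≤ y) (h2 : y ≤ z) :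
    sFactor x y ++ sFactor y z = sFactor x z := by
  apply List.ext_getElem (by simp [sFactor_length]; omega)
  intro i hi hi'
  rw [sFactor_getElem]
  rcases lt_or_ge i ((sFactor x y).length) with h | h
  · rw [List.getElem_append_left h, sFactor_getElem]
  · rw [List.getElem_append_right h, sFactor_getElem]
    rw [sFactor_length] at h ⊢
    congr 1
    omega

lemma pal_symB (x y : ℕ) (hxy : x ≤ y) : IsPal (sFactor x y) ↔ SymB x y := by
  rw [isPal_iff]
  constructor
  · intro h i h1 h2
    have hl : i - x < (sFactor x y).length := by rw [sFactor_length]; omega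
    have hj : y - 1 - i < (sFactor x y).length := by rw [sFactor_length]; omega
    have := h (i - x) (y - 1 - i) hl hj (by rw [sFactor_length]; omega)
    rw [sFactor_getElem, sFactor_getElem] at this
    have e1 : x + (i - x) = i := by omega
    have e2 : x + (y - 1 - i) = x + y - 1 - i := by omega
    rw [e1, e2] at this
    exact this
  · intro h i j hi hj hsum
    rw [sFactor_getElem, sFactor_getElem]
    rw [sFactor_length] at hsum hi hj
    have := h (x + i) (by omega) (by omega)
    rw [this]
    congr 1
    omega

lemma pal_sPrefix_pow (k : ℕ) : IsPal (sPrefix (3 ^ k)) := by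
  rw [sPrefix_eq_s6, pal_symB _ _ (Nat.zero_le _)]
  intro i h1 h2
  have := s_S3 k i (by omega)
  rw [this]
  congr 1
  omega

-- P0
lemma lem_P0 (n : ℕ) (hn : 1 ≤ n) (h : SymB 0 n) : ∃ k, n = 3 ^ k := by
  set k := Nat.log 3 n with hk
  have h3 : (0:ℕ) < 3 ^ k := (by positivity)
  have hp : 3 ^ (k+1) = 3 * 3 ^ k := by ring
  have hl : 3 ^ k ≤ n := Nat.pow_log_le_self 3 (by omega)
  have hu : n < 3 ^ (k+1) := Nat.lt_pow_succ_log_self (by norm_num) n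
  refine ⟨k, ?_⟩
  by_contra hne
  have hgt : 3 ^ k < n := by omega
  by_cases hc : n ≤ 2 * 3 ^ k
  · have h1 : sW (n - 1) = true := s_S2 k (n-1) (by omega) (by omega)
    have h2 := h (n-1) (by omega) (by omega)
    have e : 0 + n - 1 - (n - 1) = 0 := by omega
    rw [e, sw_zero] at h2
    rw [h2] at h1
    exact absurd h1 (by simp)
  · have h1 : sW (n - 3 ^ k) = true := s_S2 k (n - 3^k) (by omega) (by omega)
    have h2 := h (n - 3 ^ k) (by omega) (by omega)
    have e : 0 + n - 1 - (n - 3 ^ k) = 3 ^ k - 1 := by omega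
    rw [e] at h2
    have h4 : sW (3 ^ k - 1) = false := by
      have := s_S3 k 0 h3
      simp at this
      rw [← this, sw_zero]
    rw [h4] at h2
    rw [h2] at h1
    exact absurd h1 (by simp)

-- symmetric-word-with-b-prefix analysis (used for P1 and case 5a of L*)
-- abstract version: if sW-values on [x,y) relate by: positions [x, x+e) all true,
-- and [x+e, y) equals sPrefix (y-x-e), with symmetry, then ...
lemma lem_P1core (e n : ℕ) (he : 1 ≤ e) (hn : 1 ≤ n)
    (hsym : ∀ i, i < n → sW i = (if n - 1 - i < e then true else sW (n - 1 - i - e)))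
    : ∃ k, n = 3 ^ k + e ∧ e ≤ 3 ^ k := by
  -- First: e ≤ n - 1
  have hen : e ≤ n - 1 := by
    by_contra hc
    have := hsym 0 (by omega)
    rw [if_pos (by omega), sw_zero] at this
    exact absurd this (by simp)
  set M := n - e with hM
  have hM1 : 1 ≤ M := by omega
  have hsym0 : SymB 0 M := by
    intro i h1 h2
    have := hsym i (by omega)
    rw [if_neg (by omega)] at this
    rw [this]
    congr 1
    omega
  obtain ⟨k, hk⟩ := lem_P0 M hM1 hsym0
  have htrue : ∀ i, M ≤ i → i < n → sW i = true := by
    intro i h1 h2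
    have := hsym i (by omega)
    rw [if_pos (by omega)] at this
    exact this
  have h3 : (0:ℕ) < 3 ^ k := (by positivity)
  have hek : e ≤ 3 ^ k := by
    by_contra hc
    have h2M : 2 * 3 ^ k < n := by omega
    have := htrue (2 * 3 ^ k) (by omega) (by omega)
    have h0 : sW (2 * 3 ^ k) = false := by
      have := s_S1 k 0 h3
      simp at this
      rw [this, sw_zero]
    rw [h0] at this
    exact absurd this (by simp)
  exact ⟨k, by omega, hek⟩

-- P1 at list level
lemma bw_getElem (e n i : ℕ) (h : i < (List.replicate e true ++ sPrefix n).length) :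
    (List.replicate e true ++ sPrefix n)[i] = if i < e then true else sW (i - e) := by
  simp only [List.length_append, List.length_replicate, sPrefix_length] at h
  by_cases hc : i < e
  · rw [List.getElem_append_left (by simpa using hc)]
    simp [hc]
  · rw [List.getElem_append_right (by simp; omega)]
    rw [if_neg hc]
    simp only [List.length_replicate]
    rw [sPrefix_getElem]

lemma lem_P1 (e n : ℕ) (he : 1 ≤ e) (hn : 1 ≤ n)
    (h : IsPal (List.replicate e true ++ sPrefix n)) :
    ∃ k, n = 3 ^ k + e ∧ e ≤ 3 ^ k := by
  rw [isPal_iff] at h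
  apply lem_P1core e n he hn
  intro i hi
  have hlen : (List.replicate e true ++ sPrefix n).length = e + n := by
    simp [sPrefix_length]
  have key := h (e + i) (n - 1 - i) (by omega) (by omega) (by omega)
  rw [bw_getElem, bw_getElem] at key
  rw [if_neg (by omega)] at key
  have e1 : e + i - e = i := by omega
  rw [e1] at key
  exact key


lemma sym_mirror (k a b : ℕ) (hab : a ≤ b) (hb : b ≤ 3 ^ k) (h : SymB a b) :
    SymB (3 ^ k - b) (3 ^ k - a) := by
  intro i h1 h2
  have h3 : (0:ℕ) < 3 ^ k := (by positivity)
  have s1 : sW i = sW (3 ^ k - 1 - i) := s_S3 k i (by omega)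
  have hj1 : a ≤ 3 ^ k - 1 - i := by omega
  have hj2 : 3 ^ k - 1 - i < b := by omega
  have s2 := h (3 ^ k - 1 - i) hj1 hj2
  have e1 : a + b - 1 - (3 ^ k - 1 - i) = a + b + i - 3 ^ k := by omega
  rw [e1] at s2
  have s3 : sW (a + b + i - 3 ^ k) = sW (3 ^ k - 1 - (a + b + i - 3 ^ k)) :=
    s_S3 k _ (by omega)
  have e2 : 3 ^ k - 1 - (a + b + i - 3 ^ k) = (3 ^ k - b) + (3 ^ k - a) - 1 - i := by omega
  rw [e2] at s3
  rw [s1, s2, s3]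

lemma lem_L : ∀ N x y : ℕ, x ≤ y → y ≤ 3 ^ N → SymB x y →
    f y ≤ f x + 1 ∧ f x ≤ f y + 1 := by
  intro N
  induction N with
  | zero =>
    intro x y hxy hy hsym
    interval_cases y
    · interval_cases x; omega
    · interval_cases x
      · rw [f_zero, f_F1 0 1 (by norm_num) (by norm_num)]; omega
      · omega
  | succ k ih =>
    intro x y hxy hy hsym
    rcases eq_or_lt_of_le hxy with rfl | hxy'
    · omega
    have h3 : (0:ℕ) < 3 ^ k := (by positivity)
    have hp : 3 ^ (k+1) = 3 * 3 ^ k := by ring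
    set B := 3 ^ k with hB
    by_cases hy1 : y ≤ B
    · exact ih x y hxy hy1 hsym
    push_neg at hy1
    by_cases hx2 : 2 * B ≤ x
    · -- case 2 : both ends in third block
      have hsym' : SymB (x - 2*B) (y - 2*B) := by
        intro i h1 h2
        have c1 : sW (2*B + i) = sW i := s_S1 k i (by omega)
        have c2 := hsym (2*B + i) (by omega) (by omega)
        have e1 : x + y - 1 - (2*B + i) = 2*B + ((x - 2*B) + (y - 2*B) - 1 - i) := by omega
        rw [e1] at c2
        have c3 : sW (2*B + ((x - 2*B) + (y - 2*B) - 1 - i)) = sW ((x - 2*B) + (y - 2*B) - 1 - i) :=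
          s_S1 k _ (by omega)
        rw [← c1, c2, c3]
      have hsymm := sym_mirror k (x - 2*B) (y - 2*B) (by omega) (by omega) hsym'
      have ih1 := ih (x - 2*B) (y - 2*B) (by omega) (by omega) hsym'
      have ih2 := ih (B - (y - 2*B)) (B - (x - 2*B)) (by omega) (by omega) hsymm
      have hfx := f_F2 k x (by omega) (by omega)
      have hfy := f_F2 k y (by omega) (by omega)
      have ex : 3 ^ (k+1) - x = B - (x - 2*B) := by omega
      have ey : 3 ^ (k+1) - y = B - (y - 2*B) := by omega
      rw [ex] at hfx
      rw [ey] at hfy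
      rw [← hB] at hfx hfy
      rcases min_cases (1 + f (x - 2*B)) (1 + f (B - (x - 2*B))) with ⟨e2, _⟩ | ⟨e2, _⟩ <;>
        rcases min_cases (1 + f (y - 2*B)) (1 + f (B - (y - 2*B))) with ⟨e3, _⟩ | ⟨e3, _⟩ <;>
        omega
    push_neg at hx2
    by_cases hy2 : y ≤ 2 * B
    · by_cases hx1 : B ≤ x
      · -- case 3
        rw [f_F1 k x (by omega) (by omega), f_F1 k y (by omega) (by omega)]
        omega
      · -- case 4
        push_neg at hx1
        set t := y - B with ht
        have ht1 : 1 ≤ t := by omega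
        have htrue : ∀ i, x ≤ i → i < x + t → sW i = true := by
          intro i h1 h2
          have := hsym i h1 (by omega)
          rw [this]
          exact s_S2 k _ (by omega) (by omega)
        have hxtB : x + t ≤ B := by
          by_contra hc
          have := htrue (B - 1) (by omega) (by omega)
          rw [sw_pow_sub_one k] at this
          exact absurd this (by simp)
        have hsym2 : SymB (x + t) B := by
          intro i h1 h2
          have := hsym i (by omega) (by omega)
          rw [this]
          congr 1
          omega
        have ihc := ih (x + t) B hxtB (le_refl _) hsym2
        have hfB : f B = 1 := f_F1 k B (le_refl _) (by omega)
        have hfxt : f x = f (x + t) := lem_BR k x (x + t) (by omega) (by omega) htrue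
        have hfy : f y = 1 := f_F1 k y (by omega) (by omega)
        omega
    · -- y > 2B
      push_neg at hy2
      by_cases hx1 : B ≤ x
      · -- case 5a
        set e := 2*B - x with he
        set m := y - 2*B with hm
        have he1 : 1 ≤ e := by omega
        have hm1 : 1 ≤ m := by omega
        have hsymc : ∀ i, i < m → sW i = (if m - 1 - i < e then true else sW (m - 1 - i - e)) := by
          intro i hi
          have c1 : sW (2*B + i) = sW i := s_S1 k i (by omega)
          have c2 := hsym (2*B + i) (by omega) (by omega)
          have e1 : x + y - 1 - (2*B + i) = x + (m - 1 - i) := by omega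
          rw [e1] at c2
          by_cases hc : m - 1 - i < e
          · rw [if_pos hc, ← c1, c2]
            exact s_S2 k _ (by omega) (by omega)
          · rw [if_neg hc, ← c1, c2]
            have e2 : x + (m - 1 - i) = 2*B + (m - 1 - i - e) := by omega
            rw [e2]
            exact s_S1 k _ (by omega)
        obtain ⟨kk, hkk, hekk⟩ := lem_P1core e m he1 hm1 hsymc
        have hfm : f m = 1 := f_F1 kk m (by omega) (by omega)
        have hfy := f_F2 k y (by omega) (by omega)
        rw [← hB] at hfy
        rw [← hm] at hfy
        have hfyle : f y ≤ 2 := by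
          rw [hfy]
          have := min_le_left (1 + f m) (1 + f (3 ^ (k + 1) - y))
          omega
        have hfx : f x = 1 := f_F1 k x (by omega) (by omega)
        have : 1 ≤ f y := f_pos y (by omega)
        omega
      · -- case 5b
        push_neg at hx1
        set m := y - 2*B with hm
        have htrue : ∀ v, x + y - 2*B ≤ v → v < x + y - B → sW v = true := by
          intro v h1 h2
          have hi1 : B ≤ x + y - 1 - v := by omega
          have hi2 : x + y - 1 - v < 2*B := by omega
          have := hsym (x + y - 1 - v) (by omega) (by omega)
          have e1 : x + y - 1 - (x + y - 1 - v) = v := by omega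
          rw [e1] at this
          rw [← this]
          exact s_S2 k _ hi1 hi2
        have hxy3 : x + y = 3 * B := by
          rcases lt_trichotomy (x + y) (3 * B) with hlt | heq | hgt
          · exfalso
            have := htrue (B - 1) (by omega) (by omega)
            rw [sw_pow_sub_one k] at this
            exact absurd this (by simp)
          · exact heq
          · exfalso
            have := htrue (2 * B) (by omega) (by omega)
            rw [sw_two_pow k] at this
            exact absurd this (by simp)
        have hfy := f_F2 k y (by omega) (by omega)
        have ex : 3 ^ (k+1) - y = x := by omega
        rw [ex] at hfy
        rw [← hB] at hfy
        rw [← hm] at hfy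
        have hMx := lem_M k m (by omega)
        have eBm : B - m = x := by omega
        rw [eBm] at hMx
        rcases min_cases (1 + f m) (1 + f x) with ⟨e2, _⟩ | ⟨e2, _⟩ <;> omega


-- ### PL basics
lemma pal_singleton {α : Type*} (c : α) : IsPal [c] := rfl

lemma singleton_decomp {α : Type*} (w : List α) :
    ∃ l : List (List α), l.length = w.length ∧ (∀ p ∈ l, IsPal p) ∧ l.flatten = w := by
  refine ⟨w.map (fun c => [c]), by simp, ?_, ?_⟩
  · intro p hp
    simp at hp
    obtain ⟨c, _, rfl⟩ := hp
    exact pal_singleton c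
  · induction w with
    | nil => simp
    | cons c w ih => simp [ih]

lemma PL_le {α : Type*} (w : List α) (l : List (List α)) (h1 : ∀ p ∈ l, IsPal p)
    (h2 : l.flatten = w) : PL w ≤ l.length :=
  Nat.sInf_le ⟨l, rfl, h1, h2⟩

lemma PL_spec {α : Type*} (w : List α) :
    ∃ l : List (List α), l.length = PL w ∧ (∀ p ∈ l, IsPal p) ∧ l.flatten = w := by
  obtain ⟨l, h1, h2, h3⟩ := singleton_decomp w
  have hne : {k | ∃ l : List (List α), l.length = k ∧ (∀ p ∈ l, IsPal p) ∧ l.flatten = w}.Nonempty :=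
    ⟨w.length, ⟨l, h1, h2, h3⟩⟩
  exact Nat.sInf_mem hne

lemma PL_nil {α : Type*} : PL ([] : List α) = 0 :=
  Nat.le_antisymm (PL_le _ [] (by simp) (by simp)) (Nat.zero_le _)

lemma PL_pal_le {α : Type*} (w : List α) (h : IsPal w) : PL w ≤ 1 :=
  PL_le w [w] (by simpa using h) (by simp)

lemma PL_append {α : Type*} (u v : List α) : PL (u ++ v) ≤ PL u + PL v := by
  obtain ⟨l1, hl1, hp1, hf1⟩ := PL_spec u
  obtain ⟨l2, hl2, hp2, hf2⟩ := PL_spec v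
  have := PL_le (u ++ v) (l1 ++ l2) ?_ ?_
  · simpa [hl1, hl2] using this
  · intro p hp; rcases List.mem_append.1 hp with h | h; exacts [hp1 p h, hp2 p h]
  · simp [hf1, hf2]

-- ### qS basics
lemma qS_le (j n : ℕ) : qS n ≤ qj j n := Nat.sInf_le ⟨j, rfl⟩

lemma qS_spec (n : ℕ) : ∃ j, qj j n = qS n := Nat.sInf_mem (Set.range_nonempty _)

-- ### LJ
lemma LJ' : ∀ (l : List (List Bool)) (j m : ℕ), 1 ≤ m → m < j → (∀ p ∈ l, IsPal p) →
    l.flatten = List.replicate j true ++ sPrefix m → ∃ j' < j, qj j' m ≤ l.length := by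
  intro l
  induction l with
  | nil =>
    intro j m hm hj _ hfl
    exfalso
    have := congrArg List.length hfl
    simp [sPrefix_length] at this
    omega
  | cons p l' ih =>
    intro j m hm hj hpal hfl
    rcases eq_or_ne p [] with rfl | hne
    · simp at hfl
      obtain ⟨j', hj', hq⟩ := ih j m hm hj (fun q hq => hpal q (by simp [hq])) hfl
      exact ⟨j', hj', by simpa using Nat.le_succ_of_le hq⟩
    · have hplen : 1 ≤ p.length := by
        rcases p with _ | _ <;> simp_all
      set W := List.replicate j true ++ sPrefix m with hW
      have hWlen : W.length = j + m := by simp [hW, sPrefix_length]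
      have hfl' : W = p ++ l'.flatten := by rw [← hfl]; simp
      have hlen2 : p.length + l'.flatten.length = j + m := by
        have := congrArg List.length hfl'
        simpa [hWlen] using this.symm
      have hgetW : ∀ i (h : i < W.length), W[i] = if i < j then true else sW (i - j) := by
        intro i h
        have e := List.getElem_of_eq hW h
        rw [e, bw_getElem]
      have hpW : ∀ i (h : i < p.length), p[i] = if i < j then true else sW (i - j) := by
        intro i h
        have e := List.getElem_of_eq hfl' (by omega : i < W.length)
        rw [← hgetW i (by omega), e]
        exact (List.getElem_append_left h).symm
      have hple : p.length ≤ j := by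
        by_contra hc
        push_neg at hc
        have hjlt : j < p.length := hc
        have h1 : p[j]'hjlt = false := by
          rw [hpW j hjlt, if_neg (by omega)]
          simpa using sw_zero
        have hi2 : p.length - 1 - j < p.length := by omega
        have h2 : p[p.length - 1 - j]'hi2 = true := by
          rw [hpW _ hi2, if_pos (by omega)]
        have := (isPal_iff p).1 (hpal p (by simp)) j (p.length - 1 - j) hjlt hi2 (by omega)
        rw [h1, h2] at this
        exact absurd this (by simp)
      -- flatten l' = replicate (j - p.length) ++ sPrefix m
      have hrep : W = List.replicate p.length true ++ (List.replicate (j - p.length) true ++ sPrefix m) := by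
        rw [hW, ← List.append_assoc, ← List.replicate_add]
        congr 2
        omega
      have hpwrep : p = List.replicate p.length true := by
        apply List.ext_getElem (by simp)
        intro i h1 h2
        rw [hpW i h1, if_pos (by omega)]
        simp
      have hflat' : l'.flatten = List.replicate (j - p.length) true ++ sPrefix m := by
        have : p ++ l'.flatten = p ++ (List.replicate (j - p.length) true ++ sPrefix m) := by
          rw [← hfl', hrep]
          congr 1
          exact hpwrep.symm
        exact List.append_cancel_left this
      refine ⟨j - p.length, by omega, ?_⟩
      calc qj (j - p.length) m = PL (List.replicate (j - p.length) true ++ sPrefix m) := rfl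
      _ ≤ l'.length := by rw [← hflat']; exact PL_le _ l' (fun q hq => hpal q (by simp [hq])) rfl
      _ ≤ (p :: l').length := by simp

lemma LJ (j m : ℕ) (hm : 1 ≤ m) : ∃ e, e ≤ m ∧ qj e m ≤ qj j m := by
  induction j using Nat.strong_induction_on with
  | _ j ih =>
  by_cases hj : j ≤ m
  · exact ⟨j, hj, le_refl _⟩
  · push_neg at hj
    obtain ⟨l, hl, hpal, hfl⟩ := PL_spec (List.replicate j true ++ sPrefix m)
    obtain ⟨j', hj', hq⟩ := LJ' l j m hm hj hpal hfl
    obtain ⟨e, he1, he2⟩ := ih j' hj'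
    refine ⟨e, he1, le_trans he2 (le_trans hq ?_)⟩
    rw [hl]
    rfl

lemma main_lb : ∀ r : ℕ, ∀ (l : List (List Bool)) (j n : ℕ), 1 ≤ n → l.length = r →
    (∀ p ∈ l, IsPal p) → l.flatten = List.replicate j true ++ sPrefix n → f n ≤ r := by
  intro r
  induction r using Nat.strong_induction_on with
  | _ r ih =>
  intro l j n hn hlen hpal hfl
  rcases List.eq_nil_or_concat l with rfl | ⟨l'', p, rfl⟩
  · exfalso
    have := congrArg List.length hfl
    simp [sPrefix_length] at this
    omega
  have hlen' : l''.length + 1 = r := by simpa using hlen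
  have hflat2 : l''.flatten ++ p = List.replicate j true ++ sPrefix n := by
    simpa using hfl
  have hlen2 : l''.flatten.length + p.length = j + n := by
    have := congrArg List.length hflat2
    simpa [sPrefix_length] using this
  have hpal'' : ∀ q ∈ l'', IsPal q := fun q hq => hpal q (by simp [hq])
  have hpalp : IsPal p := hpal p (by simp)
  set d := p.length with hd
  by_cases hd0 : d = 0
  · have hpnil : p = [] := List.eq_nil_of_length_eq_zero hd0
    subst hpnil
    simp at hflat2
    exact le_trans (ih l''.length (by omega) l'' j n hn rfl hpal'' hflat2) (by omega)
  by_cases hdn : d ≤ n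
  · have hsp : sPrefix n = sPrefix (n - d) ++ sFactor (n - d) n := by
      rw [sPrefix_eq_s6, sPrefix_eq_s6]
      exact (sFactor_append 0 (n-d) n (by omega) (by omega)).symm
    have hflat3 : l''.flatten ++ p =
        (List.replicate j true ++ sPrefix (n - d)) ++ sFactor (n - d) n := by
      rw [hflat2, hsp, List.append_assoc]
    have hinj := List.append_inj hflat3 (by
      simp only [List.length_append, List.length_replicate, sPrefix_length]
      have := sFactor_length (n-d) n
      omega)
    obtain ⟨hfl'', hp⟩ := hinj
    rw [hp] at hpalp
    have hsym : SymB (n - d) n := (pal_symB _ _ (by omega)).1 hpalp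
    have hL := lem_L n (n - d) n (by omega) (le_of_lt (Nat.lt_pow_self (by norm_num))) hsym
    by_cases hnd : n - d = 0
    · rw [hnd, f_zero] at hL
      omega
    · have := ih l''.length (by omega) l'' j (n - d) (by omega) rfl hpal'' hfl''
      omega
  · push_neg at hdn
    have hjd : d - n ≤ j := by omega
    have hsplit : List.replicate j true ++ sPrefix n =
        List.replicate (j - (d - n)) true ++ (List.replicate (d - n) true ++ sPrefix n) := by
      rw [← List.append_assoc, ← List.replicate_add]
      congr 2
      omega
    have hflat3 := hflat2.trans hsplit
    have hinj := List.append_inj hflat3 (by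
      simp only [List.length_append, List.length_replicate, sPrefix_length]
      omega)
    obtain ⟨_, hp⟩ := hinj
    rw [hp] at hpalp
    obtain ⟨kk, hkk, hekk⟩ := lem_P1 (d - n) n (by omega) hn hpalp
    have hf1 : f n = 1 := f_F1 kk n (by omega) (by omega)
    omega

lemma qj_ge (j n : ℕ) (hn : 1 ≤ n) : f n ≤ qj j n := by
  obtain ⟨l, hl, hpal, hfl⟩ := PL_spec (List.replicate j true ++ sPrefix n)
  exact main_lb (qj j n) l j n hn hl hpal hfl

lemma qS_ge (n : ℕ) (hn : 1 ≤ n) : f n ≤ qS n := by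
  obtain ⟨j, hj⟩ := qS_spec n
  rw [← hj]
  exact qj_ge j n hn

lemma sPrefix_split1 (k n : ℕ) (h1 : 3 ^ k ≤ n) (h2 : n ≤ 2 * 3 ^ k) :
    sPrefix n = sPrefix (3 ^ k) ++ List.replicate (n - 3 ^ k) true := by
  apply List.ext_getElem (by simp [sPrefix_length]; omega)
  intro i hi hi'
  rw [sPrefix_getElem]
  rw [sPrefix_length] at hi
  rcases lt_or_ge i (3 ^ k) with h | h
  · rw [List.getElem_append_left (by rw [sPrefix_length]; exact h), sPrefix_getElem]
  · rw [List.getElem_append_right (by rw [sPrefix_length]; omega)]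
    rw [List.getElem_replicate]
    exact s_S2 k i h (by omega)

lemma sPrefix_split2 (k m : ℕ) (hm : m ≤ 3 ^ k) :
    sPrefix (2 * 3 ^ k + m) = (sPrefix (3 ^ k) ++ List.replicate (3 ^ k) true) ++ sPrefix m := by
  apply List.ext_getElem (by simp [sPrefix_length]; omega)
  intro i hi hi'
  rw [sPrefix_getElem]
  rw [sPrefix_length] at hi
  rcases lt_or_ge i (2 * 3 ^ k) with h | h
  · rw [List.getElem_append_left (by simp [sPrefix_length]; omega)]
    rcases lt_or_ge i (3 ^ k) with h' | h'
    · rw [List.getElem_append_left (by rw [sPrefix_length]; exact h'), sPrefix_getElem]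
    · rw [List.getElem_append_right (by rw [sPrefix_length]; omega)]
      rw [List.getElem_replicate]
      exact s_S2 k i h' (by omega)
  · rw [List.getElem_append_right (by simp [sPrefix_length]; omega)]
    rw [sPrefix_getElem]
    have e1 : i = 2 * 3 ^ k + (i - 2 * 3 ^ k) := by omega
    have := s_S1 k (i - 2 * 3 ^ k) (by omega)
    conv_lhs => rw [e1]
    rw [this]
    congr 1
    simp only [List.length_append, sPrefix_length, List.length_replicate]
    omega

lemma pal_bPb (e k : ℕ) :
    IsPal (List.replicate e true ++ sPrefix (3 ^ k) ++ List.replicate e true) := by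
  have hP' : (sPrefix (3 ^ k)).reverse = sPrefix (3 ^ k) := pal_sPrefix_pow k
  show _ = _
  simp [List.reverse_append, List.reverse_replicate, hP', List.append_assoc]

lemma U_F1 (k n : ℕ) (h1 : 3 ^ k ≤ n) (h2 : n ≤ 2 * 3 ^ k) : qS n ≤ 1 := by
  refine le_trans (qS_le (n - 3 ^ k) n) ?_
  show PL _ ≤ 1
  apply PL_pal_le
  rw [sPrefix_split1 k n h1 h2, ← List.append_assoc]
  exact pal_bPb (n - 3 ^ k) k

lemma U1 (k m : ℕ) (hm1 : 1 ≤ m) (hm2 : m ≤ 3 ^ k) :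
    qS (2 * 3 ^ k + m) ≤ 1 + qS m := by
  obtain ⟨j0, hj0⟩ := qS_spec m
  obtain ⟨e, hem, he⟩ := LJ j0 m hm1
  have hee : e ≤ 3 ^ k := le_trans hem hm2
  have hid : List.replicate (3 ^ k - e) true ++ sPrefix (2 * 3 ^ k + m) =
      (List.replicate (3 ^ k - e) true ++ sPrefix (3 ^ k) ++ List.replicate (3 ^ k - e) true) ++
        (List.replicate e true ++ sPrefix m) := by
    rw [sPrefix_split2 k m hm2]
    simp only [List.append_assoc]
    congr 2
    rw [← List.append_assoc, ← List.replicate_add]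
    have : 3 ^ k - e + e = 3 ^ k := by omega
    rw [this]
  calc qS (2 * 3 ^ k + m) ≤ qj (3 ^ k - e) (2 * 3 ^ k + m) := qS_le _ _
  _ = PL (List.replicate (3 ^ k - e) true ++ sPrefix (2 * 3 ^ k + m)) := rfl
  _ ≤ 1 + qj e m := by
      rw [hid]
      refine le_trans (PL_append _ _) ?_
      have := PL_pal_le _ (pal_bPb (3 ^ k - e) k)
      have h2 : PL (List.replicate e true ++ sPrefix m) = qj e m := rfl
      omega
  _ ≤ 1 + qS m := by omega

lemma U2 (k n : ℕ) (h1 : 2 * 3 ^ k < n) (h2 : n ≤ 3 ^ (k + 1)) :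
    qS n ≤ 1 + qS (3 ^ (k + 1) - n) := by
  have h3 : (0:ℕ) < 3 ^ k := (by positivity)
  have hp : 3 ^ (k+1) = 3 * 3 ^ k := by ring
  set t := 3 ^ (k + 1) - n with ht
  have htn : t ≤ n := by omega
  obtain ⟨j0, hj0⟩ := qS_spec t
  have hsym : SymB t n := by
    intro i hi1 hi2
    have := s_S3 (k+1) i (by omega)
    rw [this]
    congr 1
    omega
  have hpal : IsPal (sFactor t n) := (pal_symB t n htn).2 hsym
  have hsp : sPrefix n = sPrefix t ++ sFactor t n := by
    rw [sPrefix_eq_s6, sPrefix_eq_s6]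
    exact (sFactor_append 0 t n (by omega) htn).symm
  calc qS n ≤ qj j0 n := qS_le _ _
  _ = PL (List.replicate j0 true ++ sPrefix n) := rfl
  _ ≤ 1 + qS t := by
      rw [hsp, ← List.append_assoc]
      refine le_trans (PL_append _ _) ?_
      have hb := PL_pal_le _ hpal
      have h2 : PL (List.replicate j0 true ++ sPrefix t) = qj j0 t := rfl
      omega

lemma q_eq_f : ∀ n, qS n = f n := by
  intro n
  induction n using Nat.strong_induction_on with
  | _ n ih =>
  rcases Nat.eq_zero_or_pos n with rfl | hn
  · rw [f_zero]
    have h0 : qj 0 0 = 0 := by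
      show PL _ = 0
      simp [sPrefix]
      exact PL_nil
    have := qS_le 0 0
    omega
  set k := Nat.log 3 n with hk
  have h3 : (0:ℕ) < 3 ^ k := (by positivity)
  have hp : 3 ^ (k+1) = 3 * 3 ^ k := by ring
  have hl : 3 ^ k ≤ n := Nat.pow_log_le_self 3 (by omega)
  have hu : n < 3 ^ (k+1) := Nat.lt_pow_succ_log_self (by norm_num) n
  by_cases hc : n ≤ 2 * 3 ^ k
  · rw [f_F1 k n hl hc]
    have := U_F1 k n hl hc
    have := qS_ge n hn
    have := f_F1 k n hl hc
    omega
  · push_neg at hc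
    have hF2 := f_F2 k n (by omega) (by omega)
    set m := n - 2 * 3 ^ k with hm
    set t := 3 ^ (k+1) - n with htd
    have hmn : m < n := by omega
    have htn : t < n := by omega
    have hU1 : qS n ≤ 1 + qS m := by
      have := U1 k m (by omega) (by omega)
      have e1 : 2 * 3 ^ k + m = n := by omega
      rw [e1] at this
      exact this
    have hU2 : qS n ≤ 1 + qS t := U2 k n hc (by omega)
    have hge : f n ≤ qS n := qS_ge n hn
    rw [ih m hmn] at hU1
    rw [ih t htn] at hU2
    rcases min_cases (1 + f m) (1 + f t) with ⟨e2, _⟩ | ⟨e2, _⟩ <;> omega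

/-- The recursion for q: q(0) = 0; q(n) = 1 for n = 1 or 3ᵏ ≤ n ≤ 2·3ᵏ; and
q(n) = min(1 + q(n − 2·3ᵏ), 1 + q(3ᵏ⁺¹ − n)) for 2·3ᵏ < n ≤ 3ᵏ⁺¹. -/
theorem q_recursion :
    qS 0 = 0 ∧
    qS 1 = 1 ∧
    (∀ k n : ℕ, 3 ^ k ≤ n → n ≤ 2 * 3 ^ k → qS n = 1) ∧
    (∀ k n : ℕ, 2 * 3 ^ k < n → n ≤ 3 ^ (k + 1) →
      qS n = min (1 + qS (n - 2 * 3 ^ k)) (1 + qS (3 ^ (k + 1) - n))) := by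
  refine ⟨?_, ?_, ?_, ?_⟩
  · rw [q_eq_f 0, f_zero]
  · rw [q_eq_f 1]
    exact f_F1 0 1 (by norm_num) (by norm_num)
  · intro k n h1 h2
    rw [q_eq_f n]
    exact f_F1 k n h1 h2
  · intro k n h1 h2
    rw [q_eq_f n, q_eq_f (n - 2 * 3 ^ k), q_eq_f (3 ^ (k+1) - n)]
    exact f_F2 k n (le_of_lt h1) h2
end

section
/- For every n with 2·3^k ≤ n ≤ 3^(k+1): p(n) = q(n) holds if and only if p(3^(k+1) − n) = q(3^(k+1) − n) and q(3^(k+1) − n) < q(n); otherwise p(n) = q(n) + 1. -/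
lemma pq_bound (q : ℕ → ℕ)
    (hq0 : q 0 = 0)
    (hq1 : q 1 = 1)
    (hq2 : ∀ k n : ℕ, 3 ^ k ≤ n → n ≤ 2 * 3 ^ k → q n = 1)
    (hq3 : ∀ k n : ℕ, 2 * 3 ^ k < n → n ≤ 3 ^ (k + 1) →
      q n = min (1 + q (n - 2 * 3 ^ k)) (1 + q (3 ^ (k + 1) - n)))
    (p : ℕ → ℕ)
    (hp0 : p 0 = 0)
    (hp1 : p 1 = 1)
    (hp2 : ∀ k n : ℕ, 3 ^ k < n → n ≤ 2 * 3 ^ k → p n = 2)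
    (hp3 : ∀ k n : ℕ, 2 * 3 ^ k < n → n ≤ 3 ^ (k + 1) →
      p n = min (2 + q (n - 2 * 3 ^ k)) (1 + p (3 ^ (k + 1) - n))) :
    ∀ m, q m ≤ p m ∧ p m ≤ q m + 1 := by
  intro m
  induction m using Nat.strong_induction_on with
  | _ m ih =>
    obtain rfl | rfl | hm2 : m = 0 ∨ m = 1 ∨ 2 ≤ m := by omega
    · simp [hq0, hp0]
    · simp [hq1, hp1]
    · have hM1 : m - 1 ≠ 0 := by omega
      set k := Nat.log 3 (m - 1) with hk
      have h1 : 3 ^ k ≤ m - 1 := Nat.pow_log_le_self 3 hM1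
      have h2 : m - 1 < 3 ^ (k + 1) := Nat.lt_pow_succ_log_self (by norm_num) _
      have h3 : (3 : ℕ) ^ (k + 1) = 3 * 3 ^ k := by ring
      by_cases hc : m ≤ 2 * 3 ^ k
      · rw [hq2 k m (by omega) hc, hp2 k m (by omega) hc]
        omega
      · push_neg at hc
        have hlt : 3 ^ (k + 1) - m < m := by omega
        have hih := ih (3 ^ (k + 1) - m) hlt
        rw [hq3 k m hc (by omega), hp3 k m hc (by omega)]
        omega

/-- For 2·3ᵏ ≤ n ≤ 3ᵏ⁺¹: p(n) = q(n) if and only if p(3ᵏ⁺¹ − n) = q(3ᵏ⁺¹ − n)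
and q(3ᵏ⁺¹ − n) < q(n); otherwise p(n) = q(n) + 1. -/
theorem p_eq_q_criterion (q : ℕ → ℕ)
    (hq0 : q 0 = 0)
    (hq1 : q 1 = 1)
    (hq2 : ∀ k n : ℕ, 3 ^ k ≤ n → n ≤ 2 * 3 ^ k → q n = 1)
    (hq3 : ∀ k n : ℕ, 2 * 3 ^ k < n → n ≤ 3 ^ (k + 1) →
      q n = min (1 + q (n - 2 * 3 ^ k)) (1 + q (3 ^ (k + 1) - n)))
    (p : ℕ → ℕ)
    (hp0 : p 0 = 0)
    (hp1 : p 1 = 1)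
    (hp2 : ∀ k n : ℕ, 3 ^ k < n → n ≤ 2 * 3 ^ k → p n = 2)
    (hp3 : ∀ k n : ℕ, 2 * 3 ^ k < n → n ≤ 3 ^ (k + 1) →
      p n = min (2 + q (n - 2 * 3 ^ k)) (1 + p (3 ^ (k + 1) - n)))
    (k n : ℕ) (h1 : 2 * 3 ^ k ≤ n) (h2 : n ≤ 3 ^ (k + 1)) :
    (p n = q n ↔
      (p (3 ^ (k + 1) - n) = q (3 ^ (k + 1) - n) ∧ q (3 ^ (k + 1) - n) < q n)) ∧
    (¬(p (3 ^ (k + 1) - n) = q (3 ^ (k + 1) - n) ∧ q (3 ^ (k + 1) - n) < q n) →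
      p n = q n + 1) := by
  have h3 : (3 : ℕ) ^ (k + 1) = 3 * 3 ^ k := by ring
  have hpos : 0 < 3 ^ k := Nat.pow_pos (by norm_num)
  rcases eq_or_lt_of_le h1 with heq | hlt
  · -- boundary case n = 2 * 3^k
    have hqn : q n = 1 := hq2 k n (by omega) (by omega)
    have hpn : p n = 2 := hp2 k n (by omega) (by omega)
    have hm : 3 ^ (k + 1) - n = 3 ^ k := by omega
    have hqm : q (3 ^ (k + 1) - n) = 1 := by
      rw [hm]; exact hq2 k _ le_rfl (by omega)
    omega
  · have hqn := hq3 k n hlt h2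
    have hpn := hp3 k n hlt h2
    have hbm := pq_bound q hq0 hq1 hq2 hq3 p hp0 hp1 hp2 hp3 (3 ^ (k + 1) - n)
    omega
end

section
/- The sequence d_p of first differences of the prefix palindromic length of the Sierpinski word is 3-automatic: d_p = c(ψ^∞(A)), where ψ is the 3-uniform morphism on {A,B,C,D,Ā,B̄,C̄,D̄,S,S'} given by ψ(A)=A B C̄, ψ(B)=B S S, ψ(C)=A B D̄, ψ(D)=D S S', ψ(Ā)=C B̄ Ā, ψ(B̄)=S S B̄, ψ(C̄)=D B̄ Ā, ψ(D̄)=S' S D̄, ψ(S)=S S S, ψ(S')=D S D̄, and c maps A,B,C,D to +1, Ā,B̄,C̄,D̄ to −1, and S,S' to 0. -/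
/-- The 3-uniform morphism ψ on the alphabet {A,B,C,D,Ā,B̄,C̄,D̄,S,S'}, encoded as
A = 0, B = 1, C = 2, D = 3, Ā = 4, B̄ = 5, C̄ = 6, D̄ = 7, S = 8, S' = 9:
ψ(A) = A B C̄, ψ(B) = B S S, ψ(C) = A B D̄, ψ(D) = D S S', ψ(Ā) = C B̄ Ā,
ψ(B̄) = S S B̄, ψ(C̄) = D B̄ Ā, ψ(D̄) = S' S D̄, ψ(S) = S S S, ψ(S') = D S D̄. -/
def psi : Fin 10 → List (Fin 10) :=
  ![[0, 1, 6], [1, 8, 8], [0, 1, 7], [3, 8, 9], [2, 5, 4],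
    [8, 8, 5], [3, 5, 4], [9, 8, 7], [8, 8, 8], [3, 8, 7]]

/-- The fixed point ψ^∞(A) of the 3-uniform morphism ψ starting with A:
its n-th letter satisfies w(n) = ψ(w(n / 3))[n % 3]. -/
def psiFix : ℕ → Fin 10
  | 0 => 0
  | n + 1 => (psi (psiFix ((n + 1) / 3))).getD ((n + 1) % 3) 0
decreasing_by exact Nat.div_lt_self (Nat.succ_pos n) (by norm_num)

/-- The coding c: A, B, C, D ↦ +1; Ā, B̄, C̄, D̄ ↦ −1; S, S' ↦ 0. -/
def codeC : Fin 10 → ℤ := ![1, 1, 1, 1, -1, -1, -1, -1, 0, 0]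

namespace DpAuto

/-- partial sums of the coded fixed point -/
def PP : ℕ → ℤ
  | 0 => 0
  | n + 1 => PP n + codeC (psiFix n)

def psiL (x : Fin 10) (r : ℕ) : Fin 10 := (psi x).getD r 0

lemma psiFix_zero : psiFix 0 = 0 := by simp [psiFix]

lemma psiFix_rec (k r : ℕ) (hr : r < 3) : psiFix (3 * k + r) = psiL (psiFix k) r := by
  rcases Nat.eq_zero_or_pos (3 * k + r) with h | h
  · have hk : k = 0 ∧ r = 0 := by omega
    obtain ⟨rfl, rfl⟩ := hk
    rw [show (3 * 0 + 0 : ℕ) = 0 by norm_num, psiFix_zero]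
    decide
  · obtain ⟨m, hm⟩ : ∃ m, 3 * k + r = m + 1 := ⟨3 * k + r - 1, by omega⟩
    rw [hm, psiFix]
    have h1 : (m + 1) / 3 = k := by omega
    have h2 : (m + 1) % 3 = r := by omega
    rw [h1, h2, psiL]

lemma psiFix0 (q : ℕ) : psiFix (3 * q) = psiL (psiFix q) 0 := by
  have := psiFix_rec q 0 (by norm_num)
  rwa [Nat.add_zero] at this

lemma psiFix1 (q : ℕ) : psiFix (3 * q + 1) = psiL (psiFix q) 1 := psiFix_rec q 1 (by norm_num)

lemma psiFix2 (q : ℕ) : psiFix (3 * q + 2) = psiL (psiFix q) 2 := psiFix_rec q 2 (by norm_num)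

def e1 : Fin 10 → ℤ := ![1, 1, 1, 1, 1, 0, 1, 0, 0, 1]
def e2 : Fin 10 → ℤ := ![2, 1, 2, 1, 0, 0, 0, 0, 0, 1]

lemma code_psiL (x : Fin 10) :
    codeC (psiL x 0) = e1 x ∧ codeC (psiL x 0) + codeC (psiL x 1) = e2 x ∧
      codeC (psiL x 0) + codeC (psiL x 1) + codeC (psiL x 2) = codeC x := by
  fin_cases x <;> refine ⟨by decide, by decide, by decide⟩

lemma PP_succ (n : ℕ) : PP (n + 1) = PP n + codeC (psiFix n) := rfl

lemma PP_mul3 (k : ℕ) : PP (3 * k) = PP k := by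
  induction k with
  | zero => rfl
  | succ k ih =>
    have a1 : PP (3 * k + 1) = PP (3 * k) + codeC (psiFix (3 * k)) := PP_succ (3 * k)
    have a2 : PP (3 * k + 2) = PP (3 * k + 1) + codeC (psiFix (3 * k + 1)) := PP_succ (3 * k + 1)
    have a3 : PP (3 * k + 3) = PP (3 * k + 2) + codeC (psiFix (3 * k + 2)) := PP_succ (3 * k + 2)
    have a4 : PP (k + 1) = PP k + codeC (psiFix k) := PP_succ k
    have e : (3 : ℕ) * (k + 1) = 3 * k + 3 := by ring
    rw [e, a3, a2, a1, psiFix0, psiFix1, psiFix2, a4, ih]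
    have := (code_psiL (psiFix k)).2.2
    omega

lemma PP_mul3_add1 (k : ℕ) : PP (3 * k + 1) = PP k + e1 (psiFix k) := by
  have a1 : PP (3 * k + 1) = PP (3 * k) + codeC (psiFix (3 * k)) := PP_succ (3 * k)
  rw [a1, PP_mul3, psiFix0]
  have := (code_psiL (psiFix k)).1
  omega

lemma PP_mul3_add2 (k : ℕ) : PP (3 * k + 2) = PP k + e2 (psiFix k) := by
  have a2 : PP (3 * k + 2) = PP (3 * k + 1) + codeC (psiFix (3 * k + 1)) := PP_succ (3 * k + 1)
  rw [a2, PP_mul3_add1, psiFix1]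
  have h1 := (code_psiL (psiFix k)).1
  have h2 := (code_psiL (psiFix k)).2.1
  omega

lemma PP_mul3_add3 (k : ℕ) : PP (3 * k + 3) = PP (k + 1) := by
  have : (3 : ℕ) * (k + 1) = 3 * k + 3 := by ring
  rw [← this, PP_mul3]

/-! ### sW recurrences -/

def img (c : Bool) : List Bool := if c then [true, true, true] else [false, true, false]

lemma phi_eq_flatMap (w : List Bool) : phi w = w.flatMap img := rfl

lemma img_length (c : Bool) : (img c).length = 3 := by cases c <;> rfl

lemma phi_getD (l : List Bool) (q r : ℕ) (hr : r < 3) (hq : q < l.length) (d : Bool) :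
    (phi l).getD (3 * q + r) d = (img (l.getD q d)).getD r d := by
  rw [phi_eq_flatMap]
  induction l generalizing q with
  | nil => simp at hq
  | cons c t ih =>
    rw [List.flatMap_cons]
    cases q with
    | zero =>
      rw [show (3 * 0 + r : ℕ) = r by ring]
      rw [List.getD_append _ _ _ _ (by rw [img_length]; omega)]
      rfl
    | succ q =>
      have hlen : (img c).length = 3 := img_length c
      rw [show (3 * (q+1) + r : ℕ) = (img c).length + (3 * q + r) by rw [hlen]; ring]
      rw [List.getD_append_right _ _ _ _ (by omega)]
      simp only [Nat.add_sub_cancel_left]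
      rw [ih q (by simpa using Nat.lt_of_succ_lt_succ (by simpa using hq))]
      rfl

lemma phi_length (l : List Bool) : (phi l).length = 3 * l.length := by
  rw [phi_eq_flatMap]
  induction l with
  | nil => rfl
  | cons c t ih =>
    rw [List.flatMap_cons, List.length_append, img_length, ih, List.length_cons]
    ring

def LW (k : ℕ) : List Bool := phi^[k] [false]

lemma LW_succ (k : ℕ) : LW (k + 1) = phi (LW k) := by
  unfold LW
  rw [Function.iterate_succ_apply']

lemma LW_length (k : ℕ) : (LW k).length = 3 ^ k := by
  induction k with
  | zero => rfl
  | succ k ih => rw [LW_succ, phi_length, ih]; ring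

lemma phi_prefix {u v : List Bool} (h : u <+: v) : phi u <+: phi v := by
  obtain ⟨t, rfl⟩ := h
  rw [phi_eq_flatMap, phi_eq_flatMap, List.flatMap_append]
  exact ⟨t.flatMap img, rfl⟩

lemma LW_prefix (k : ℕ) : LW k <+: LW (k + 1) := by
  induction k with
  | zero => exact ⟨[true, false], rfl⟩
  | succ k ih => rw [LW_succ, LW_succ]; exact phi_prefix ih

lemma LW_prefix_le {k l : ℕ} (h : k ≤ l) : LW k <+: LW l := by
  induction l with
  | zero => rw [Nat.le_zero.mp h]
  | succ l ih =>
    rcases Nat.lt_or_ge k (l + 1) with h' | h'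
    · exact (ih (by omega)).trans (LW_prefix l)
    · rw [Nat.le_antisymm h h']

lemma getD_prefix {u v : List Bool} (h : u <+: v) (n : ℕ) (hn : n < u.length) (d : Bool) :
    v.getD n d = u.getD n d := by
  obtain ⟨t, rfl⟩ := h
  rw [List.getD_append _ _ _ _ hn]

lemma lt_pow3 (n : ℕ) : n < 3 ^ n := Nat.lt_pow_self (by norm_num)

lemma sW_eq_LW (k n : ℕ) (hn : n < 3 ^ k) : sW n = (LW k).getD n true := by
  unfold sW
  rcases le_or_gt k (n + 1) with h | h
  · exact getD_prefix (LW_prefix_le h) n (by rw [LW_length]; omega) true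
  · refine (getD_prefix (LW_prefix_le (le_of_lt h)) n ?_ true).symm
    rw [LW_length, pow_succ]
    have := lt_pow3 n
    omega

lemma sW_zero : sW 0 = false := rfl

lemma sW_rec (q r : ℕ) (hr : r < 3) : sW (3 * q + r) = (img (sW q)).getD r true := by
  have hk : q < 3 ^ q := lt_pow3 q
  have h2 : 3 * q + r < 3 ^ (q + 1) := by rw [pow_succ]; omega
  rw [sW_eq_LW (q+1) _ h2, sW_eq_LW q q hk, LW_succ,
    phi_getD _ q r hr (by rw [LW_length]; omega)]

lemma sW0 (q : ℕ) : sW (3 * q) = sW q := by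
  have h := sW_rec q 0 (by norm_num)
  rw [Nat.add_zero] at h
  rw [h]
  cases sW q <;> rfl

lemma sW1 (q : ℕ) : sW (3 * q + 1) = true := by
  rw [sW_rec q 1 (by norm_num)]
  cases sW q <;> rfl

lemma sW2 (q : ℕ) : sW (3 * q + 2) = sW q := by
  rw [sW_rec q 2 (by norm_num)]
  cases sW q <;> rfl

/-- sval: the letter determines the Sierpinski letter. -/
def sval : Fin 10 → Bool := ![false, true, false, false, false, true, false, false, true, false]

lemma sW_eq_sval (i : ℕ) : sW i = sval (psiFix i) := by
  induction i using Nat.strong_induction_on with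
  | _ i ih =>
    rcases Nat.eq_zero_or_pos i with rfl | hi
    · rw [sW_zero, psiFix_zero]; rfl
    obtain ⟨q, r, hr, rfl⟩ : ∃ q r, r < 3 ∧ i = 3 * q + r :=
      ⟨i / 3, i % 3, Nat.mod_lt _ (by norm_num), by omega⟩
    interval_cases r
    · rw [Nat.add_zero] at hi ⊢
      rw [sW0, ih q (by omega), psiFix0]
      have : ∀ x : Fin 10, sval (psiL x 0) = sval x := by decide
      rw [this]
    · rw [sW1, psiFix1]
      have : ∀ x : Fin 10, sval (psiL x 1) = true := by decide
      rw [this]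
    · rw [sW2, ih q (by omega), psiFix2]
      have : ∀ x : Fin 10, sval (psiL x 2) = sval x := by decide
      rw [this]

/-- adjacency relation of consecutive letters in the fixed point -/
def ADJ : Fin 10 → Fin 10 → Prop := fun x y =>
  (x, y) ∈ ([(0,1),(4,1),(1,6),(1,7),(1,8),(5,0),(5,4),(5,2),(2,5),(6,1),(3,5),(3,8),(7,8),(8,5),(8,3),(8,7),(8,8),(8,9),(9,8)] : List (Fin 10 × Fin 10))

instance ADJ_dec (x y : Fin 10) : Decidable (ADJ x y) := by unfold ADJ; infer_instance

lemma ADJ_holds (k : ℕ) : ADJ (psiFix k) (psiFix (k + 1)) := by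
  induction k using Nat.strong_induction_on with
  | _ k ih =>
    obtain ⟨q, r, hr, rfl⟩ : ∃ q r, r < 3 ∧ k = 3 * q + r :=
      ⟨k / 3, k % 3, Nat.mod_lt _ (by norm_num), by omega⟩
    interval_cases r
    · rw [Nat.add_zero, psiFix0, show 3 * q + 1 = 3 * q + 1 from rfl, psiFix1]
      have : ∀ x : Fin 10, ADJ (psiL x 0) (psiL x 1) := by decide
      exact this _
    · rw [psiFix1, show 3 * q + 1 + 1 = 3 * q + 2 by ring, psiFix2]
      have : ∀ x : Fin 10, ADJ (psiL x 1) (psiL x 2) := by decide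
      exact this _
    · rw [psiFix2, show 3 * q + 2 + 1 = 3 * (q + 1) by ring, psiFix0]
      have h := ih q (by omega)
      have : ∀ x y : Fin 10, ADJ x y → ADJ (psiL x 2) (psiL y 0) := by decide
      exact this _ _ h

end DpAuto
namespace DpAuto

/-- s[m..n-1] is a palindrome -/
def Pal (m n : ℕ) : Prop := ∀ i, m ≤ i → i < n → sW i = sW (m + n - 1 - i)

/-- s[u..v-1] is all b's -/
def Allb (u v : ℕ) : Prop := ∀ j, u ≤ j → j < v → sW j = true

lemma pal_single (n : ℕ) (h : 1 ≤ n) : Pal (n - 1) n := by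
  intro i h1 h2
  have : i = n - 1 := by omega
  subst this
  congr 1
  omega

lemma allb_up {a b u v : ℕ} (h1 : 3 * a ≤ u) (h2 : v ≤ 3 * b) (H : Allb a b) : Allb u v := by
  intro i hi1 hi2
  obtain ⟨q, s, hs, rfl⟩ : ∃ q s, s < 3 ∧ i = 3 * q + s := ⟨i / 3, i % 3, by omega, by omega⟩
  interval_cases s
  · rw [Nat.add_zero, sW0]; exact H q (by omega) (by omega)
  · exact sW1 q
  · rw [sW2]; exact H q (by omega) (by omega)

lemma allbRed {a b r t : ℕ} (hr : r < 3) (ht : t < 3) (h : 3 * a + r + 3 ≤ 3 * b + t + 1) :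
    Allb (3 * a + r) (3 * b + t + 1) ↔ Allb a (b + 1) := by
  constructor
  · intro H j hj1 hj2
    rcases Nat.eq_or_lt_of_le hj1 with heq | hj
    · have h1 := H (3 * j + 2) (by omega) (by omega)
      rwa [sW2] at h1
    · have h1 := H (3 * j) (by omega) (by omega)
      rwa [sW0] at h1
  · intro H
    exact allb_up (a := a) (b := b + 1) (by omega) (by omega) H

lemma palRed00 {a b : ℕ} (h : a < b) : Pal (3 * a) (3 * b) ↔ Pal a b := by
  constructor
  · intro H j hj1 hj2
    have h1 := H (3 * j) (by omega) (by omega)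
    rw [sW0, show 3 * a + 3 * b - 1 - 3 * j = 3 * (a + b - 1 - j) + 2 by omega, sW2] at h1
    exact h1
  · intro H i h1 h2
    obtain ⟨q, s, hs, rfl⟩ : ∃ q s, s < 3 ∧ i = 3 * q + s := ⟨i / 3, i % 3, by omega, by omega⟩
    interval_cases s
    · rw [Nat.add_zero, sW0, show 3 * a + 3 * b - 1 - 3 * q = 3 * (a + b - 1 - q) + 2 by omega,
        sW2]
      exact H q (by omega) (by omega)
    · rw [sW1, show 3 * a + 3 * b - 1 - (3 * q + 1) = 3 * (a + b - 1 - q) + 1 by omega, sW1]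
    · rw [sW2, show 3 * a + 3 * b - 1 - (3 * q + 2) = 3 * (a + b - 1 - q) by omega, sW0]
      exact H q (by omega) (by omega)

lemma palRed12 {a b : ℕ} (h : a ≤ b) : Pal (3 * a + 1) (3 * b + 2) ↔ Pal a (b + 1) := by
  have hc : 3 * a + 1 + (3 * b + 2) - 1 = 3 * a + 3 * b + 2 := by omega
  constructor
  · intro H j hj1 hj2
    rcases Nat.lt_or_ge j b with hj | hj
    · have h1 := H (3 * j + 2) (by omega) (by omega)
      rw [sW2, show 3 * a + 1 + (3 * b + 2) - 1 - (3 * j + 2) = 3 * (a + b - j) by omega,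
        sW0] at h1
      rw [show a + (b + 1) - 1 - j = a + b - j by omega]
      exact h1
    · have hj' : j = b := by omega
      rcases Nat.eq_or_lt_of_le hj1 with heq | hab
      · rw [show a + (b + 1) - 1 - j = j by omega]
      · have h1 := H (3 * a + 2) (by omega) (by omega)
        rw [sW2, show 3 * a + 1 + (3 * b + 2) - 1 - (3 * a + 2) = 3 * b by omega, sW0] at h1
        rw [show a + (b + 1) - 1 - j = a by omega, hj']
        exact h1.symm
  · intro H i h1 h2
    obtain ⟨q, s, hs, rfl⟩ : ∃ q s, s < 3 ∧ i = 3 * q + s := ⟨i / 3, i % 3, by omega, by omega⟩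
    interval_cases s
    · rw [Nat.add_zero, sW0, show 3 * a + 1 + (3 * b + 2) - 1 - 3 * q = 3 * (a + b - q) + 2
        by omega, sW2]
      have := H q (by omega) (by omega)
      rwa [show a + (b + 1) - 1 - q = a + b - q by omega] at this
    · rw [sW1, show 3 * a + 1 + (3 * b + 2) - 1 - (3 * q + 1) = 3 * (a + b - q) + 1 by omega, sW1]
    · rw [sW2, show 3 * a + 1 + (3 * b + 2) - 1 - (3 * q + 2) = 3 * (a + b - q) by omega, sW0]
      have := H q (by omega) (by omega)
      rwa [show a + (b + 1) - 1 - q = a + b - q by omega] at this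

lemma palRed21 {a b : ℕ} (h : a < b) : Pal (3 * a + 2) (3 * b + 1) ↔ Pal a (b + 1) := by
  constructor
  · intro H j hj1 hj2
    rcases Nat.eq_or_lt_of_le hj1 with heq | hj
    · have h1 := H (3 * j + 2) (by omega) (by omega)
      rw [sW2, show 3 * a + 2 + (3 * b + 1) - 1 - (3 * j + 2) = 3 * b by omega, sW0] at h1
      rwa [show a + (b + 1) - 1 - j = b by omega]
    · have h1 := H (3 * j) (by omega) (by omega)
      rw [sW0, show 3 * a + 2 + (3 * b + 1) - 1 - 3 * j = 3 * (a + b - j) + 2 by omega,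
        sW2] at h1
      rwa [show a + (b + 1) - 1 - j = a + b - j by omega]
  · intro H i h1 h2
    obtain ⟨q, s, hs, rfl⟩ : ∃ q s, s < 3 ∧ i = 3 * q + s := ⟨i / 3, i % 3, by omega, by omega⟩
    interval_cases s
    · rw [Nat.add_zero, sW0, show 3 * a + 2 + (3 * b + 1) - 1 - 3 * q = 3 * (a + b - q) + 2
        by omega, sW2]
      have := H q (by omega) (by omega)
      rwa [show a + (b + 1) - 1 - q = a + b - q by omega] at this
    · rw [sW1, show 3 * a + 2 + (3 * b + 1) - 1 - (3 * q + 1) = 3 * (a + b - q) + 1 by omega, sW1]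
    · rw [sW2, show 3 * a + 2 + (3 * b + 1) - 1 - (3 * q + 2) = 3 * (a + b - q) by omega, sW0]
      have := H q (by omega) (by omega)
      rwa [show a + (b + 1) - 1 - q = a + b - q by omega] at this

lemma palRed01 {a b : ℕ} (h : a < b) : Pal (3 * a) (3 * b + 1) ↔ Allb a (b + 1) := by
  constructor
  · intro H
    have key : ∀ j, a ≤ j → j < b → sW j = true := by
      intro j hj1 hj2
      have h1 := H (3 * j + 2) (by omega) (by omega)
      rwa [sW2, show 3 * a + (3 * b + 1) - 1 - (3 * j + 2) = 3 * (a + b - j - 1) + 1 by omega,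
        sW1] at h1
    intro j hj1 hj2
    rcases Nat.lt_or_ge j b with hj | hj
    · exact key j hj1 hj
    · have hj' : j = b := by omega
      have h1 := H (3 * j) (by omega) (by omega)
      rw [sW0, show 3 * a + (3 * b + 1) - 1 - 3 * j = 3 * a by omega, sW0] at h1
      rw [h1]
      exact key a (le_refl a) h
  · intro H i h1 h2
    obtain ⟨q, s, hs, rfl⟩ : ∃ q s, s < 3 ∧ i = 3 * q + s := ⟨i / 3, i % 3, by omega, by omega⟩
    interval_cases s
    · rw [Nat.add_zero, sW0, show 3 * a + (3 * b + 1) - 1 - 3 * q = 3 * (a + b - q) by omega,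
        sW0, H q (by omega) (by omega), H (a + b - q) (by omega) (by omega)]
    · rw [sW1, show 3 * a + (3 * b + 1) - 1 - (3 * q + 1) = 3 * (a + b - q - 1) + 2 by omega,
        sW2, H (a + b - q - 1) (by omega) (by omega)]
    · rw [sW2, show 3 * a + (3 * b + 1) - 1 - (3 * q + 2) = 3 * (a + b - q - 1) + 1 by omega,
        sW1, H q (by omega) (by omega)]

lemma palRed02 {a b : ℕ} (h : a ≤ b) : Pal (3 * a) (3 * b + 2) ↔ Allb a (b + 1) := by
  constructor
  · intro H j hj1 hj2
    have h1 := H (3 * (a + b - j) + 1) (by omega) (by omega)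
    rw [sW1, show 3 * a + (3 * b + 2) - 1 - (3 * (a + b - j) + 1) = 3 * j by omega, sW0] at h1
    exact h1.symm
  · intro H i h1 h2
    obtain ⟨q, s, hs, rfl⟩ : ∃ q s, s < 3 ∧ i = 3 * q + s := ⟨i / 3, i % 3, by omega, by omega⟩
    interval_cases s
    · rw [Nat.add_zero, sW0, show 3 * a + (3 * b + 2) - 1 - 3 * q = 3 * (a + b - q) + 1 by omega,
        sW1, H q (by omega) (by omega)]
    · rw [sW1, show 3 * a + (3 * b + 2) - 1 - (3 * q + 1) = 3 * (a + b - q) by omega,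
        sW0, H (a + b - q) (by omega) (by omega)]
    · rw [sW2, show 3 * a + (3 * b + 2) - 1 - (3 * q + 2) = 3 * (a + b - q - 1) + 2 by omega,
        sW2, H q (by omega) (by omega), H (a + b - q - 1) (by omega) (by omega)]

lemma palRed10 {a b : ℕ} (h : a < b) : Pal (3 * a + 1) (3 * b) ↔ Allb a b := by
  constructor
  · intro H j hj1 hj2
    have h1 := H (3 * j + 2) (by omega) (by omega)
    rwa [sW2, show 3 * a + 1 + 3 * b - 1 - (3 * j + 2) = 3 * (a + b - j - 1) + 1 by omega,
      sW1] at h1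
  · intro H i h1 h2
    obtain ⟨q, s, hs, rfl⟩ : ∃ q s, s < 3 ∧ i = 3 * q + s := ⟨i / 3, i % 3, by omega, by omega⟩
    interval_cases s
    · rw [Nat.add_zero, sW0, show 3 * a + 1 + 3 * b - 1 - 3 * q = 3 * (a + b - q) by omega,
        sW0, H q (by omega) (by omega), H (a + b - q) (by omega) (by omega)]
    · rw [sW1, show 3 * a + 1 + 3 * b - 1 - (3 * q + 1) = 3 * (a + b - q - 1) + 2 by omega,
        sW2, H (a + b - q - 1) (by omega) (by omega)]
    · rw [sW2, show 3 * a + 1 + 3 * b - 1 - (3 * q + 2) = 3 * (a + b - q - 1) + 1 by omega,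
        sW1, H q (by omega) (by omega)]

lemma palRed11 {a b : ℕ} (h : a < b) :
    Pal (3 * a + 1) (3 * b + 1) ↔ (Allb (a + 1) (b + 1) ∧ sW a = sW (b - 1)) := by
  constructor
  · intro H
    constructor
    · intro j hj1 hj2
      have h1 := H (3 * j) (by omega) (by omega)
      rwa [sW0, show 3 * a + 1 + (3 * b + 1) - 1 - 3 * j = 3 * (a + b - j) + 1 by omega,
        sW1] at h1
    · have h1 := H (3 * a + 2) (by omega) (by omega)
      rwa [sW2, show 3 * a + 1 + (3 * b + 1) - 1 - (3 * a + 2) = 3 * (b - 1) + 2 by omega,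
        sW2] at h1
  · rintro ⟨H, hab⟩ i h1 h2
    obtain ⟨q, s, hs, rfl⟩ : ∃ q s, s < 3 ∧ i = 3 * q + s := ⟨i / 3, i % 3, by omega, by omega⟩
    interval_cases s
    · rw [Nat.add_zero, sW0, show 3 * a + 1 + (3 * b + 1) - 1 - 3 * q = 3 * (a + b - q) + 1
        by omega, sW1, H q (by omega) (by omega)]
    · rw [sW1, show 3 * a + 1 + (3 * b + 1) - 1 - (3 * q + 1) = 3 * (a + b - q) by omega,
        sW0, H (a + b - q) (by omega) (by omega)]
    · rw [sW2, show 3 * a + 1 + (3 * b + 1) - 1 - (3 * q + 2) = 3 * (a + b - q - 1) + 2 by omega,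
        sW2]
      rcases Nat.eq_or_lt_of_le (show a ≤ q by omega) with heq | hq
      · rw [show a + b - q - 1 = b - 1 by omega, ← heq]
        exact hab
      · rcases Nat.eq_or_lt_of_le (show a ≤ a + b - q - 1 by omega) with heq2 | hq2
        · rw [← heq2, show q = b - 1 by omega]
          exact hab.symm
        · rw [H q (by omega) (by omega), H (a + b - q - 1) (by omega) (by omega)]

lemma palRed22bab (a : ℕ) : Pal (3 * a + 2) (3 * (a + 1) + 2) ↔ sW a = true := by
  constructor
  · intro H
    have h1 := H (3 * a + 2) (by omega) (by omega)
    rwa [sW2, show 3 * a + 2 + (3 * (a + 1) + 2) - 1 - (3 * a + 2) = 3 * (a + 1) + 1 by omega,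
      sW1] at h1
  · intro H i h1 h2
    have hc : 3 * a + 2 + (3 * (a + 1) + 2) - 1 = 6 * a + 6 := by omega
    have : i = 3 * a + 2 ∨ i = 3 * a + 3 ∨ i = 3 * a + 4 := by omega
    rcases this with rfl | rfl | rfl
    · rw [sW2, show 3 * a + 2 + (3 * (a + 1) + 2) - 1 - (3 * a + 2) = 3 * (a + 1) + 1 by omega,
        sW1, H]
    · congr 1
      omega
    · rw [show 3 * a + 4 = 3 * (a + 1) + 1 by omega, sW1,
        show 3 * a + 2 + (3 * (a + 1) + 2) - 1 - (3 * (a + 1) + 1) = 3 * a + 2 by omega,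
        sW2, H]

lemma palRed22 {a b : ℕ} (h : a + 2 ≤ b) : Pal (3 * a + 2) (3 * b + 2) ↔ Allb a (b + 1) := by
  constructor
  · intro H
    have key : ∀ j, a ≤ j → j < b → sW j = true := by
      intro j hj1 hj2
      have h1 := H (3 * (a + b - j) + 1) (by omega) (by omega)
      rw [sW1, show 3 * a + 2 + (3 * b + 2) - 1 - (3 * (a + b - j) + 1) = 3 * j + 2 by omega,
        sW2] at h1
      exact h1.symm
    intro j hj1 hj2
    rcases Nat.lt_or_ge j b with hj | hj
    · exact key j hj1 hj
    · have hj' : j = b := by omega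
      have h1 := H (3 * j) (by omega) (by omega)
      rw [sW0, show 3 * a + 2 + (3 * b + 2) - 1 - 3 * j = 3 * (a + 1) by omega, sW0] at h1
      rw [h1]
      exact key (a + 1) (by omega) (by omega)
  · intro H i h1 h2
    obtain ⟨q, s, hs, rfl⟩ : ∃ q s, s < 3 ∧ i = 3 * q + s := ⟨i / 3, i % 3, by omega, by omega⟩
    interval_cases s
    · rw [Nat.add_zero, sW0, show 3 * a + 2 + (3 * b + 2) - 1 - 3 * q = 3 * (a + b + 1 - q)
        by omega, sW0, H q (by omega) (by omega), H (a + b + 1 - q) (by omega) (by omega)]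
    · rw [sW1, show 3 * a + 2 + (3 * b + 2) - 1 - (3 * q + 1) = 3 * (a + b - q) + 2 by omega,
        sW2, H (a + b - q) (by omega) (by omega)]
    · rw [sW2, show 3 * a + 2 + (3 * b + 2) - 1 - (3 * q + 2) = 3 * (a + b - q) + 1 by omega,
        sW1, H q (by omega) (by omega)]

lemma palRed20 {a b : ℕ} (h : a + 2 ≤ b) : Pal (3 * a + 2) (3 * b) ↔ Allb a b := by
  constructor
  · intro H
    have key : ∀ j, a + 1 ≤ j → j < b → sW j = true := by
      intro j hj1 hj2
      have h1 := H (3 * j) (by omega) (by omega)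
      rwa [sW0, show 3 * a + 2 + 3 * b - 1 - 3 * j = 3 * (a + b - j) + 1 by omega, sW1] at h1
    intro j hj1 hj2
    rcases Nat.eq_or_lt_of_le hj1 with heq | hj
    · have h1 := H (3 * j + 2) (by omega) (by omega)
      rw [sW2, show 3 * a + 2 + 3 * b - 1 - (3 * j + 2) = 3 * (b - 1) + 2 by omega, sW2] at h1
      rw [h1]
      exact key (b - 1) (by omega) (by omega)
    · exact key j (by omega) hj2
  · intro H i h1 h2
    obtain ⟨q, s, hs, rfl⟩ : ∃ q s, s < 3 ∧ i = 3 * q + s := ⟨i / 3, i % 3, by omega, by omega⟩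
    interval_cases s
    · rw [Nat.add_zero, sW0, show 3 * a + 2 + 3 * b - 1 - 3 * q = 3 * (a + b - q) + 1 by omega,
        sW1, H q (by omega) (by omega)]
    · rw [sW1, show 3 * a + 2 + 3 * b - 1 - (3 * q + 1) = 3 * (a + b - q) by omega,
        sW0, H (a + b - q) (by omega) (by omega)]
    · rw [sW2, show 3 * a + 2 + 3 * b - 1 - (3 * q + 2) = 3 * (a + b - q - 1) + 2 by omega,
        sW2, H q (by omega) (by omega), H (a + b - q - 1) (by omega) (by omega)]

end DpAuto
namespace DpAuto

def htab : Fin 10 → Fin 10 → ℤ :=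
  ![![99, 99, 99, 99, 99, 99, 99, 99, 99, 99],
    ![99, -1, 99, 99, 99, 99, 99, 99, -1, 99],
    ![99, 99, 99, 99, 99, 99, 99, 99, 99, 99],
    ![99, 99, 99, 99, 99, 99, 99, 99, 99, 99],
    ![99, 99, 99, 99, 99, 99, 99, 99, 99, 99],
    ![99, 99, 99, 99, 99, 1, 99, 99, 99, 99],
    ![99, 99, 99, 99, 99, 99, 99, 99, 99, 99],
    ![99, 99, 99, 99, 99, 99, 99, 99, 99, 99],
    ![99, 99, 99, 99, 99, 1, 99, 99, 0, 99],
    ![99, 99, 99, 99, 99, 99, 99, 99, 99, 99]]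

def gtab : Fin 10 → Fin 10 → ℤ :=
  ![![-1, 99, 99, 99, -1, 99, -1, -1, 99, 99],
    ![99, -1, 99, 99, 99, -1, 99, 99, -1, 99],
    ![99, 99, -1, 99, 1, 99, -1, 99, 99, -1],
    ![99, 99, 99, -1, 1, 99, 99, -1, 99, -1],
    ![-1, 99, 99, -1, 1, 99, 99, 99, 99, 99],
    ![99, -1, 99, 99, 99, 1, 99, 99, 0, 99],
    ![99, 99, -1, -1, 99, 99, 1, 99, 99, 0],
    ![1, 99, 1, -1, 99, 99, 99, 1, 99, 1],
    ![99, 0, 99, 99, 99, 0, 99, 99, -1, 99],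
    ![99, 99, 0, -1, 99, 99, 1, 1, 99, -1]]

def RbB : Fin 10 → Fin 10 → Bool :=
  ![![false, false, false, false, false, false, false, false, false, false],
    ![false, true, false, false, false, false, false, false, true, false],
    ![false, false, false, false, false, false, false, false, false, false],
    ![false, false, false, false, false, false, false, false, false, false],
    ![false, false, false, false, false, false, false, false, false, false],
    ![false, false, false, false, false, true, false, false, false, false],
    ![false, false, false, false, false, false, false, false, false, false],
    ![false, false, false, false, false, false, false, false, false, false],
    ![false, false, false, false, false, true, false, false, true, false],
    ![false, false, false, false, false, false, false, false, false, false]]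

def RpB : Fin 10 → Fin 10 → Bool :=
  ![![true, false, false, false, true, false, true, true, false, false],
    ![false, true, false, false, false, true, false, false, true, false],
    ![false, false, true, false, true, false, true, false, false, true],
    ![false, false, false, true, true, false, false, true, false, true],
    ![true, false, false, true, true, false, false, false, false, false],
    ![false, true, false, false, false, true, false, false, true, false],
    ![false, false, true, true, false, false, true, false, false, true],
    ![true, false, true, true, false, false, false, true, false, true],
    ![false, true, false, false, false, true, false, false, true, false],
    ![false, false, true, true, false, false, true, true, false, true]]

def DegB : Fin 10 → Fin 10 → Bool :=
  ![![false, false, false, false, false, false, false, false, false, false],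
    ![false, true, false, false, false, false, false, false, false, false],
    ![false, false, false, false, false, false, false, false, false, false],
    ![false, false, false, false, false, false, false, false, false, false],
    ![false, false, false, false, false, false, false, false, false, false],
    ![false, false, false, false, false, true, false, false, false, false],
    ![false, false, false, false, false, false, false, false, false, false],
    ![false, false, false, false, false, false, false, false, false, false],
    ![false, false, false, false, false, false, false, false, false, false],
    ![false, false, false, false, false, false, false, false, false, false]]

def DegP : Fin 10 → Fin 10 → Bool :=
  ![![true, false, false, false, false, false, false, false, false, false],
    ![false, false, false, false, false, false, false, false, false, false],
    ![false, false, false, false, false, false, false, false, false, false],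
    ![false, false, false, false, false, false, false, false, false, false],
    ![false, false, false, false, true, false, false, false, false, false],
    ![false, false, false, false, false, false, false, false, false, false],
    ![false, false, false, false, false, false, false, false, false, false],
    ![false, false, false, false, false, false, false, true, false, false],
    ![false, false, false, false, false, false, false, false, false, false],
    ![false, false, false, false, false, false, false, false, false, false]]

end DpAuto
namespace DpAuto

def Ef : ℕ → Fin 10 → ℤ := fun r x => if r = 0 then 0 else if r = 1 then e1 x else e2 x
def Et : ℕ → Fin 10 → ℤ := fun t y => if t = 0 then e1 y else if t = 1 then e2 y else codeC y

lemma PP_shiftL (a r : ℕ) (hr : r < 3) : PP (3 * a + r) = PP a + Ef r (psiFix a) := by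
  interval_cases r
  · rw [Nat.add_zero, PP_mul3]; simp [Ef]
  · rw [PP_mul3_add1]; simp [Ef]
  · rw [PP_mul3_add2]; simp [Ef]

lemma PP_shiftR (b t : ℕ) (ht : t < 3) : PP (3 * b + t + 1) = PP b + Et t (psiFix b) := by
  interval_cases t
  · rw [show 3 * b + 0 + 1 = 3 * b + 1 by omega, PP_mul3_add1]; simp [Et]
  · rw [show 3 * b + 1 + 1 = 3 * b + 2 by omega, PP_mul3_add2]; simp [Et]
  · rw [show 3 * b + 2 + 1 = 3 * b + 3 by omega, PP_mul3_add3, PP_succ]; simp [Et]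

lemma FH (r t : ℕ) (hr : r < 3) (ht : t < 3) :
    ∀ x y : Fin 10, RbB x y = true → DegB x y = false →
      RbB (psiL x r) (psiL y t) = true ∧
      htab (psiL x r) (psiL y t) ≤ htab x y + Ef r x + codeC y - Et t y ∧
      DegB (psiL x r) (psiL y t) = false := by
  interval_cases r <;> interval_cases t <;> decide

lemma FHdeg : ∀ x : Fin 10, DegB x x = true →
    RbB (psiL x 0) (psiL x 2) = true ∧ htab (psiL x 0) (psiL x 2) ≤ -codeC x ∧
    DegB (psiL x 0) (psiL x 2) = false := by decide

lemma FH1 : ∀ x : Fin 10, sval x = true →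
    RbB x x = true ∧ -codeC x ≥ htab x x := by decide

lemma FH2 : ∀ x y : Fin 10, ADJ x y → sval x = true → sval y = true →
    RbB x y = true ∧ -codeC x - codeC y ≥ htab x y ∧ DegB x y = false := by decide

theorem Hclaim : ∀ v u, u < v → Allb u v →
    RbB (psiFix u) (psiFix (v - 1)) = true ∧
    PP u - PP v ≥ htab (psiFix u) (psiFix (v - 1)) ∧
    (DegB (psiFix u) (psiFix (v - 1)) = true → v = u + 1) := by
  intro v
  induction v using Nat.strong_induction_on with
  | _ v ih =>
    intro u huv H
    rcases eq_or_lt_of_le (show u + 1 ≤ v by omega) with h1 | h1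
    · rw [show v - 1 = u by omega]
      have hx : sW u = true := H u (le_refl u) (by omega)
      rw [sW_eq_sval] at hx
      have hp : PP v = PP u + codeC (psiFix u) := by rw [← h1]; exact PP_succ u
      obtain ⟨k1, k2⟩ := FH1 _ hx
      exact ⟨k1, by omega, fun _ => by omega⟩
    rcases eq_or_lt_of_le (show u + 2 ≤ v by omega) with h2 | h2
    · rw [show v - 1 = u + 1 by omega]
      have hx : sW u = true := H u (le_refl u) (by omega)
      have hy : sW (u + 1) = true := H (u + 1) (by omega) (by omega)
      rw [sW_eq_sval] at hx hy
      have p1 : PP (u + 1) = PP u + codeC (psiFix u) := PP_succ u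
      have p2 : PP (u + 2) = PP (u + 1) + codeC (psiFix (u + 1)) := PP_succ (u + 1)
      rw [show v = u + 2 by omega]
      obtain ⟨k1, k2, k3⟩ := FH2 _ _ (ADJ_holds u) hx hy
      refine ⟨k1, by omega, fun hd => ?_⟩
      rw [k3] at hd
      exact Bool.noConfusion hd
    · obtain ⟨a, r, hr, rfl⟩ : ∃ a r, r < 3 ∧ u = 3 * a + r := ⟨u / 3, u % 3, by omega, by omega⟩
      obtain ⟨b, t, ht, rfl⟩ : ∃ b t, t < 3 ∧ v = 3 * b + t + 1 :=
        ⟨(v - 1) / 3, (v - 1) % 3, by omega, by omega⟩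
      have hred := (allbRed hr ht (by omega)).mp H
      obtain ⟨k1, k2, k3⟩ := ih (b + 1) (by omega) a (by omega) hred
      rw [show b + 1 - 1 = b by omega] at k1 k2 k3
      have hpb : PP (b + 1) = PP b + codeC (psiFix b) := PP_succ b
      rw [show 3 * b + t + 1 - 1 = 3 * b + t by omega]
      rw [psiFix_rec a r hr, psiFix_rec b t ht, PP_shiftL a r hr, PP_shiftR b t ht]
      cases hDeg : DegB (psiFix a) (psiFix b) with
      | true =>
        have hba : b = a := by have := k3 hDeg; omega
        have hrt : r = 0 ∧ t = 2 := by omega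
        obtain ⟨rfl, rfl⟩ := hrt
        rw [hba] at hDeg ⊢
        obtain ⟨d1, d2, d3⟩ := FHdeg _ hDeg
        refine ⟨d1, ?_, fun hd => ?_⟩
        · have he : Ef 0 (psiFix a) = 0 := by simp [Ef]
          have he2 : Et 2 (psiFix a) = codeC (psiFix a) := by simp [Et]
          omega
        · rw [d3] at hd
          exact Bool.noConfusion hd
      | false =>
        obtain ⟨d1, d2, d3⟩ := FH r t hr ht _ _ k1 hDeg
        refine ⟨d1, by omega, fun hd => ?_⟩
        rw [d3] at hd
        exact Bool.noConfusion hd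

/-! ### decide facts for the Pal table -/

lemma FG1 : ∀ x : Fin 10, RpB x x = true ∧ -codeC x ≥ gtab x x := by decide

lemma G00 : ∀ x y : Fin 10, RpB x y = true →
    RpB (psiL x 0) (psiL y 2) = true ∧ gtab (psiL x 0) (psiL y 2) ≤ gtab x y ∧
    DegP (psiL x 0) (psiL y 2) = false := by decide

lemma G12 : ∀ x y : Fin 10, RpB x y = true →
    RpB (psiL x 1) (psiL y 1) = true ∧
    gtab (psiL x 1) (psiL y 1) ≤ gtab x y + e1 x + codeC y - e2 y ∧
    DegP (psiL x 1) (psiL y 1) = false := by decide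

lemma G21 : ∀ x y : Fin 10, RpB x y = true → DegP x y = false →
    RpB (psiL x 2) (psiL y 0) = true ∧
    gtab (psiL x 2) (psiL y 0) ≤ gtab x y + e2 x + codeC y - e1 y ∧
    DegP (psiL x 2) (psiL y 0) = false := by decide

lemma G01 : ∀ x y : Fin 10, RbB x y = true →
    RpB (psiL x 0) (psiL y 0) = true ∧
    gtab (psiL x 0) (psiL y 0) ≤ htab x y + codeC y - e1 y ∧
    DegP (psiL x 0) (psiL y 0) = false := by decide

lemma G02 : ∀ x y : Fin 10, RbB x y = true →
    RpB (psiL x 0) (psiL y 1) = true ∧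
    gtab (psiL x 0) (psiL y 1) ≤ htab x y + codeC y - e2 y ∧
    DegP (psiL x 0) (psiL y 1) = false := by decide

lemma G10 : ∀ x y : Fin 10, RbB x y = true →
    RpB (psiL x 1) (psiL y 2) = true ∧
    gtab (psiL x 1) (psiL y 2) ≤ htab x y + e1 x ∧
    DegP (psiL x 1) (psiL y 2) = false := by decide

lemma G20 : ∀ x y : Fin 10, RbB x y = true →
    RpB (psiL x 2) (psiL y 2) = true ∧
    gtab (psiL x 2) (psiL y 2) ≤ htab x y + e2 x ∧
    DegP (psiL x 2) (psiL y 2) = false := by decide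

lemma G22 : ∀ x y : Fin 10, RbB x y = true →
    RpB (psiL x 2) (psiL y 1) = true ∧
    gtab (psiL x 2) (psiL y 1) ≤ htab x y + e2 x + codeC y - e2 y ∧
    DegP (psiL x 2) (psiL y 1) = false := by decide

lemma G11bab : ∀ x x1 : Fin 10, ADJ x x1 → sval x1 = true →
    RpB (psiL x 1) (psiL x1 0) = true ∧
    gtab (psiL x 1) (psiL x1 0) ≤ e1 x - codeC x - e1 x1 ∧
    DegP (psiL x 1) (psiL x1 0) = false := by decide

lemma G22bab : ∀ x x1 : Fin 10, ADJ x x1 → sval x = true →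
    RpB (psiL x 2) (psiL x1 1) = true ∧
    gtab (psiL x 2) (psiL x1 1) ≤ e2 x - codeC x - e2 x1 ∧
    DegP (psiL x 2) (psiL x1 1) = false := by decide

lemma G11long : ∀ x x1 y : Fin 10, ADJ x x1 → sval x = true → RbB x1 y = true →
    RpB (psiL x 1) (psiL y 0) = true ∧
    gtab (psiL x 1) (psiL y 0) ≤ htab x1 y - codeC x + e1 x + codeC y - e1 y ∧
    DegP (psiL x 1) (psiL y 0) = false := by decide

end DpAuto
namespace DpAuto

theorem Gclaim : ∀ n m, m < n → Pal m n →
    RpB (psiFix m) (psiFix (n - 1)) = true ∧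
    PP m - PP n ≥ gtab (psiFix m) (psiFix (n - 1)) ∧
    (DegP (psiFix m) (psiFix (n - 1)) = true → n = m + 1) := by
  intro n
  induction n using Nat.strong_induction_on with
  | _ n ih =>
    intro m hmn H
    rcases eq_or_lt_of_le (show m + 1 ≤ n by omega) with h1 | h1
    · -- single letter
      rw [show n - 1 = m by omega]
      have hp : PP n = PP m + codeC (psiFix m) := by rw [← h1]; exact PP_succ m
      obtain ⟨k1, k2⟩ := FG1 (psiFix m)
      exact ⟨k1, by omega, fun _ => by omega⟩
    · obtain ⟨a, r, hr, rfl⟩ : ∃ a r, r < 3 ∧ m = 3 * a + r := ⟨m / 3, m % 3, by omega, by omega⟩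
      obtain ⟨b, t, ht, rfl⟩ : ∃ b t, t < 3 ∧ n = 3 * b + t := ⟨n / 3, n % 3, by omega, by omega⟩
      interval_cases r <;> interval_cases t
      · -- (0,0)
        simp only [Nat.add_zero] at H hmn h1 ⊢
        have hab : a < b := by omega
        obtain ⟨k1, k2, k3⟩ := ih b (by omega) a hab ((palRed00 hab).mp H)
        have hpb : PP b = PP (b - 1) + codeC (psiFix (b - 1)) := by
          rw [show b = (b - 1) + 1 by omega, PP_succ, show b - 1 + 1 - 1 = b - 1 by omega]
        rw [show 3 * b - 1 = 3 * (b - 1) + 2 by omega, psiFix0, psiFix2,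
          PP_mul3, PP_mul3]
        obtain ⟨d1, d2, d3⟩ := G00 _ _ k1
        exact ⟨d1, by omega, fun hd => by rw [d3] at hd; exact Bool.noConfusion hd⟩
      · -- (0,1)
        simp only [Nat.add_zero] at H hmn h1 ⊢
        have hab : a < b := by omega
        obtain ⟨k1, k2, k3⟩ := Hclaim (b + 1) a (by omega) ((palRed01 hab).mp H)
        rw [show b + 1 - 1 = b by omega] at k1 k2 k3
        have hpb : PP (b + 1) = PP b + codeC (psiFix b) := PP_succ b
        rw [show 3 * b + 1 - 1 = 3 * b by omega, psiFix0, psiFix0, PP_mul3, PP_mul3_add1]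
        obtain ⟨d1, d2, d3⟩ := G01 _ _ k1
        exact ⟨d1, by omega, fun hd => by rw [d3] at hd; exact Bool.noConfusion hd⟩
      · -- (0,2)
        simp only [Nat.add_zero] at H hmn h1 ⊢
        have hab : a ≤ b := by omega
        obtain ⟨k1, k2, k3⟩ := Hclaim (b + 1) a (by omega) ((palRed02 hab).mp H)
        rw [show b + 1 - 1 = b by omega] at k1 k2 k3
        have hpb : PP (b + 1) = PP b + codeC (psiFix b) := PP_succ b
        rw [show 3 * b + 2 - 1 = 3 * b + 1 by omega, psiFix0, psiFix1, PP_mul3, PP_mul3_add2]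
        obtain ⟨d1, d2, d3⟩ := G02 _ _ k1
        exact ⟨d1, by omega, fun hd => by rw [d3] at hd; exact Bool.noConfusion hd⟩
      · -- (1,0)
        simp only [Nat.add_zero] at H hmn h1 ⊢
        have hab : a < b := by omega
        obtain ⟨k1, k2, k3⟩ := Hclaim b a hab ((palRed10 hab).mp H)
        have hpb : PP b = PP (b - 1) + codeC (psiFix (b - 1)) := by
          rw [show b = (b - 1) + 1 by omega, PP_succ, show b - 1 + 1 - 1 = b - 1 by omega]
        rw [show 3 * b - 1 = 3 * (b - 1) + 2 by omega, psiFix1, psiFix2, PP_mul3_add1, PP_mul3]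
        obtain ⟨d1, d2, d3⟩ := G10 _ _ k1
        exact ⟨d1, by omega, fun hd => by rw [d3] at hd; exact Bool.noConfusion hd⟩
      · -- (1,1)
        have hab : a < b := by omega
        obtain ⟨hAb, hmid⟩ := (palRed11 hab).mp H
        rcases eq_or_lt_of_le (show a + 1 ≤ b by omega) with hb | hb
        · -- bab : b = a+1
          have hsv : sW (a + 1) = true := hAb (a + 1) (le_refl _) (by omega)
          rw [sW_eq_sval] at hsv
          have hadj := ADJ_holds a
          have hp1 : PP (a + 1) = PP a + codeC (psiFix a) := PP_succ a
          rw [show 3 * b + 1 - 1 = 3 * (a + 1) by omega, psiFix1, psiFix0,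
            PP_mul3_add1, show 3 * b + 1 = 3 * (a + 1) + 1 by omega, PP_mul3_add1]
          obtain ⟨d1, d2, d3⟩ := G11bab _ _ hadj hsv
          exact ⟨d1, by omega, fun hd => by rw [d3] at hd; exact Bool.noConfusion hd⟩
        · -- long : b ≥ a+2
          have hsb : sW (b - 1) = true := hAb (b - 1) (by omega) (by omega)
          have hsa : sW a = true := by rw [hmid]; exact hsb
          rw [sW_eq_sval] at hsa
          have hadj := ADJ_holds a
          obtain ⟨k1, k2, k3⟩ := Hclaim (b + 1) (a + 1) (by omega) hAb
          rw [show b + 1 - 1 = b by omega] at k1 k2 k3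
          have hp1 : PP (a + 1) = PP a + codeC (psiFix a) := PP_succ a
          have hpb : PP (b + 1) = PP b + codeC (psiFix b) := PP_succ b
          rw [show 3 * b + 1 - 1 = 3 * b by omega, psiFix1, psiFix0, PP_mul3_add1,
            PP_mul3_add1]
          obtain ⟨d1, d2, d3⟩ := G11long _ _ _ hadj hsa k1
          exact ⟨d1, by omega, fun hd => by rw [d3] at hd; exact Bool.noConfusion hd⟩
      · -- (1,2)
        have hab : a ≤ b := by omega
        obtain ⟨k1, k2, k3⟩ := ih (b + 1) (by omega) a (by omega) ((palRed12 hab).mp H)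
        rw [show b + 1 - 1 = b by omega] at k1 k2 k3
        have hpb : PP (b + 1) = PP b + codeC (psiFix b) := PP_succ b
        rw [show 3 * b + 2 - 1 = 3 * b + 1 by omega, psiFix1, psiFix1, PP_mul3_add1,
          PP_mul3_add2]
        obtain ⟨d1, d2, d3⟩ := G12 _ _ k1
        exact ⟨d1, by omega, fun hd => by rw [d3] at hd; exact Bool.noConfusion hd⟩
      · -- (2,0)
        simp only [Nat.add_zero] at H hmn h1 ⊢
        have hab : a + 2 ≤ b := by omega
        obtain ⟨k1, k2, k3⟩ := Hclaim b a (by omega) ((palRed20 hab).mp H)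
        have hpb : PP b = PP (b - 1) + codeC (psiFix (b - 1)) := by
          rw [show b = (b - 1) + 1 by omega, PP_succ, show b - 1 + 1 - 1 = b - 1 by omega]
        rw [show 3 * b - 1 = 3 * (b - 1) + 2 by omega, psiFix2, psiFix2, PP_mul3_add2, PP_mul3]
        obtain ⟨d1, d2, d3⟩ := G20 _ _ k1
        exact ⟨d1, by omega, fun hd => by rw [d3] at hd; exact Bool.noConfusion hd⟩
      · -- (2,1)
        have hab : a < b := by omega
        obtain ⟨k1, k2, k3⟩ := ih (b + 1) (by omega) a (by omega) ((palRed21 hab).mp H)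
        rw [show b + 1 - 1 = b by omega] at k1 k2 k3
        have hnd : DegP (psiFix a) (psiFix b) = false := by
          cases hD : DegP (psiFix a) (psiFix b) with
          | false => rfl
          | true => have := k3 hD; omega
        have hpb : PP (b + 1) = PP b + codeC (psiFix b) := PP_succ b
        rw [show 3 * b + 1 - 1 = 3 * b by omega, psiFix2, psiFix0, PP_mul3_add2, PP_mul3_add1]
        obtain ⟨d1, d2, d3⟩ := G21 _ _ k1 hnd
        exact ⟨d1, by omega, fun hd => by rw [d3] at hd; exact Bool.noConfusion hd⟩
      · -- (2,2)
        have hab : a < b := by omega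
        rcases eq_or_lt_of_le (show a + 1 ≤ b by omega) with hb | hb
        · -- bab
          have H' : Pal (3 * a + 2) (3 * (a + 1) + 2) := by
            rw [show 3 * (a + 1) + 2 = 3 * b + 2 by omega]
            exact H
          have hsa : sW a = true := (palRed22bab a).mp H'
          rw [sW_eq_sval] at hsa
          have hadj := ADJ_holds a
          have hp1 : PP (a + 1) = PP a + codeC (psiFix a) := PP_succ a
          rw [show 3 * b + 2 - 1 = 3 * (a + 1) + 1 by omega, psiFix2, psiFix1,
            PP_mul3_add2, show 3 * b + 2 = 3 * (a + 1) + 2 by omega, PP_mul3_add2]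
          obtain ⟨d1, d2, d3⟩ := G22bab _ _ hadj hsa
          exact ⟨d1, by omega, fun hd => by rw [d3] at hd; exact Bool.noConfusion hd⟩
        · -- long
          have hab2 : a + 2 ≤ b := by omega
          obtain ⟨k1, k2, k3⟩ := Hclaim (b + 1) a (by omega) ((palRed22 hab2).mp H)
          rw [show b + 1 - 1 = b by omega] at k1 k2 k3
          have hpb : PP (b + 1) = PP b + codeC (psiFix b) := PP_succ b
          rw [show 3 * b + 2 - 1 = 3 * b + 1 by omega, psiFix2, psiFix1, PP_mul3_add2,
            PP_mul3_add2]
          obtain ⟨d1, d2, d3⟩ := G22 _ _ k1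
          exact ⟨d1, by omega, fun hd => by rw [d3] at hd; exact Bool.noConfusion hd⟩

lemma gtab_ge : ∀ x y : Fin 10, RpB x y = true → gtab x y ≥ -1 := by decide

/-- The lower bound: any palindromic suffix start has P-value ≥ P n - 1. -/
lemma pal_lower {m n : ℕ} (h : m < n) (H : Pal m n) : PP n - 1 ≤ PP m := by
  obtain ⟨k1, k2, _⟩ := Gclaim n m h H
  have := gtab_ge _ _ k1
  omega

end DpAuto
namespace DpAuto

/-- witness letter relation -/
def LamB : Fin 10 → Fin 10 → Bool := fun z x =>
  (z, x) ∈ ([(0,0),(1,1),(2,6),(3,3),(4,0),(5,1),(6,0),(7,3),(8,1),(8,8),(9,3),(9,9)] :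
    List (Fin 10 × Fin 10))

/-- all-b witness with letter B -/
def Vpr (n : ℕ) : Prop := ∃ a, a < n ∧ Allb a n ∧ PP a = PP n - 1 ∧ psiFix a = 1

theorem Uclaim : ∀ n, 1 ≤ n → ∃ m, m < n ∧ Pal m n ∧ PP m = PP n - 1 ∧
    LamB (psiFix (n - 1)) (psiFix m) = true ∧
    (psiFix (n - 1) = 8 → psiFix m = 1 → Vpr n) := by
  intro n
  induction n using Nat.strong_induction_on with
  | _ n ih =>
    intro hn
    rcases eq_or_lt_of_le hn with h1 | h1
    · -- n = 1
      refine ⟨0, by omega, ?_, ?_, ?_, ?_⟩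
      · rw [← h1]; intro i hi1 hi2; interval_cases i; rfl
      · rw [← h1]; rw [show PP 1 = PP 0 + codeC (psiFix 0) from PP_succ 0, psiFix_zero]; decide
      · rw [← h1, show (1:ℕ) - 1 = 0 from rfl, psiFix_zero]; decide
      · rw [← h1, show (1:ℕ) - 1 = 0 from rfl, psiFix_zero]; intro h; exact absurd h (by decide)
    · obtain ⟨b, t, ht, rfl⟩ : ∃ b t, t < 3 ∧ n = 3 * b + t := ⟨n / 3, n % 3, by omega, by omega⟩
      interval_cases t
      · -- t = 0 : n = 3b, b ≥ 1
        simp only [Nat.add_zero] at h1 ih ⊢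
        have hb1 : 1 ≤ b := by omega
        obtain ⟨mh, hmh, hPal, hPP, hLam, hV⟩ := ih b (by omega) hb1
        have hb2 : b - 1 + 1 = b := by omega
        refine ⟨3 * mh, by omega, (palRed00 hmh).mpr hPal, ?_, ?_, ?_⟩
        · rw [PP_mul3, PP_mul3]; omega
        · rw [show 3 * b - 1 = 3 * (b - 1) + 2 by omega, psiFix2, psiFix0]
          have key : ∀ z x : Fin 10, LamB z x = true →
              LamB (psiL z 2) (psiL x 0) = true := by decide
          exact key _ _ hLam
        · rw [show 3 * b - 1 = 3 * (b - 1) + 2 by omega, psiFix2, psiFix0]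
          intro hz hx
          have hz' : psiFix (b - 1) = 1 ∨ psiFix (b - 1) = 8 := by
            have : ∀ z : Fin 10, psiL z 2 = 8 → (z = 1 ∨ z = 8) := by decide
            exact this _ hz
          have hx' : psiFix mh = 1 := by
            have : ∀ x : Fin 10, psiL x 0 = 1 → x = 1 := by decide
            exact this _ hx
          have hPPb : PP b = PP (b - 1) + codeC (psiFix (b - 1)) := by
            conv_lhs => rw [← hb2]
            exact PP_succ (b - 1)
          rcases hz' with hz' | hz'
          · -- z = B : direct Vpr
            refine ⟨3 * (b - 1), by omega, ?_, ?_, ?_⟩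
            · refine allb_up (a := b - 1) (b := b) (by omega) (by omega) ?_
              intro j hj1 hj2
              have : j = b - 1 := by omega
              rw [this, sW_eq_sval, hz']
              rfl
            · rw [PP_mul3, PP_mul3, hPPb, hz']
              have : codeC (1 : Fin 10) = 1 := by decide
              omega
            · rw [psiFix0, hz']
              decide
          · -- z = S : lift Vpr from level below
            obtain ⟨a, ha1, ha2, ha3, ha4⟩ := hV hz' hx'
            refine ⟨3 * a, by omega, allb_up (a := a) (b := b) (by omega) (by omega) ha2, ?_, ?_⟩
            · rw [PP_mul3, PP_mul3]; omega
            · rw [psiFix0, ha4]; decide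
      · -- t = 1 : n = 3b+1, b ≥ 1
        have hb1 : 1 ≤ b := by omega
        have hnm1 : 3 * b + 1 - 1 = 3 * b := by omega
        by_cases hA : e1 (psiFix b) = 1 ∧ psiFix b ≠ 4
        · -- easy: m = n-1 = 3b
          obtain ⟨hA1, hA2⟩ := hA
          refine ⟨3 * b, by omega, ?_, ?_, ?_, ?_⟩
          · have := pal_single (3 * b + 1) (by omega)
            rwa [hnm1] at this
          · rw [PP_mul3, PP_mul3_add1]; omega
          · rw [hnm1, psiFix0]
            have key : ∀ y : Fin 10, e1 y = 1 → y ≠ 4 → LamB (psiL y 0) (psiL y 0) = true := by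
              decide
            exact key _ hA1 hA2
          · rw [hnm1, psiFix0]
            intro hz
            have : ∀ y : Fin 10, e1 y = 1 → y ≠ 4 → psiL y 0 ≠ 8 := by decide
            exact absurd hz (this _ hA1 hA2)
        · -- hard letters: y ∈ {Ā, B̄, D̄, S}
          have hy4 : psiFix b = 4 ∨ psiFix b = 5 ∨ psiFix b = 7 ∨ psiFix b = 8 := by
            by_contra hcon
            push_neg at hcon
            obtain ⟨c1, c2, c3, c4⟩ := hcon
            apply hA
            revert c1 c2 c3 c4
            have : ∀ y : Fin 10, y ≠ 4 → y ≠ 5 → y ≠ 7 → y ≠ 8 → (e1 y = 1 ∧ y ≠ 4) := by decide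
            intro c1 c2 c3 c4
            exact this _ c1 c2 c3 c4
          obtain ⟨mh, hmh, hPal, hPP, hLam, hV⟩ := ih (b + 1) (by omega) (by omega)
          rw [show b + 1 - 1 = b by omega] at hLam hV
          have hPPb : PP (b + 1) = PP b + codeC (psiFix b) := PP_succ b
          by_cases hS : psiFix b = 8 ∧ psiFix mh = 1
          · -- s3 via Vpr
            obtain ⟨a, ha1, ha2, ha3, ha4⟩ := hV hS.1 hS.2
            have hane : a ≠ b := by
              intro h
              rw [h] at ha3
              rw [hS.1] at hPPb
              have : codeC (8 : Fin 10) = 0 := by decide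
              omega
            refine ⟨3 * a, by omega, (palRed01 (by omega)).mpr ha2, ?_, ?_, ?_⟩
            · rw [PP_mul3, PP_mul3_add1, hS.1]
              rw [hS.1] at hPPb
              have c8 : codeC (8 : Fin 10) = 0 := by decide
              have e8 : e1 (8 : Fin 10) = 0 := by decide
              omega
            · rw [hnm1, psiFix0, psiFix0, ha4, hS.1]; decide
            · intro _ _
              refine ⟨3 * a, by omega, allb_up (a := a) (b := b + 1) (by omega) (by omega) ha2,
                ?_, ?_⟩
              · rw [PP_mul3, PP_mul3_add1, hS.1]
                rw [hS.1] at hPPb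
                have c8 : codeC (8 : Fin 10) = 0 := by decide
                have e8 : e1 (8 : Fin 10) = 0 := by decide
                omega
              · rw [psiFix0, ha4]; decide
          · -- s2 : m = 3 mh + 2
            have hkey : e2 (psiFix mh) = e1 (psiFix b) - codeC (psiFix b) ∧
                codeC (psiFix b) ≠ 1 ∧ (psiL (psiFix b) 0 = 8 → psiL (psiFix mh) 2 = 8) := by
              have : ∀ y x : Fin 10, (y = 4 ∨ y = 5 ∨ y = 7 ∨ y = 8) → LamB y x = true →
                  ¬(y = 8 ∧ x = 1) →
                  (e2 x = e1 y - codeC y ∧ codeC y ≠ 1 ∧ (psiL y 0 = 8 → psiL x 2 = 8)) := by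
                decide
              have h' := this _ _ hy4 hLam hS
              exact ⟨h'.1, h'.2.1, h'.2.2⟩
            have hmhb : mh ≠ b := by
              intro h
              rw [h] at hPP
              have := hkey.2.1
              omega
            refine ⟨3 * mh + 2, by omega, (palRed21 (by omega)).mpr hPal, ?_, ?_, ?_⟩
            · rw [PP_mul3_add2, PP_mul3_add1]
              have := hkey.1
              omega
            · rw [hnm1, psiFix0, psiFix2]
              have : ∀ y x : Fin 10, (y = 4 ∨ y = 5 ∨ y = 7 ∨ y = 8) → LamB y x = true →
                  ¬(y = 8 ∧ x = 1) → LamB (psiL y 0) (psiL x 2) = true := by decide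
              exact this _ _ hy4 hLam hS
            · rw [hnm1, psiFix0, psiFix2]
              intro hz hx
              exfalso
              have : ∀ y x : Fin 10, (y = 4 ∨ y = 5 ∨ y = 7 ∨ y = 8) → LamB y x = true →
                  ¬(y = 8 ∧ x = 1) → psiL y 0 = 8 → psiL x 2 ≠ 1 := by decide
              exact this _ _ hy4 hLam hS hz hx
      · -- t = 2 : n = 3b+2
        have hnm1 : 3 * b + 2 - 1 = 3 * b + 1 := by omega
        by_cases hAC : psiFix b = 0 ∨ psiFix b = 2
        · -- m = n - 1
          refine ⟨3 * b + 1, by omega, ?_, ?_, ?_, ?_⟩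
          · have := pal_single (3 * b + 2) (by omega)
            rwa [hnm1] at this
          · rw [PP_mul3_add1, PP_mul3_add2]
            have : ∀ y : Fin 10, (y = 0 ∨ y = 2) → e2 y - e1 y = 1 := by decide
            have := this _ hAC
            omega
          · rw [hnm1, psiFix1]
            have : ∀ y : Fin 10, (y = 0 ∨ y = 2) → LamB (psiL y 1) (psiL y 1) = true := by decide
            exact this _ hAC
          · rw [hnm1, psiFix1]
            intro hz
            have : ∀ y : Fin 10, (y = 0 ∨ y = 2) → psiL y 1 ≠ 8 := by decide
            exact absurd hz (this _ hAC)
        by_cases hB : psiFix b = 1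
        · -- y = B : m = 3b, also gives Vpr
          have hsb : sW b = true := by rw [sW_eq_sval, hB]; rfl
          have hallb : Allb b (b + 1) := by
            intro j hj1 hj2
            have : j = b := by omega
            rw [this]; exact hsb
          refine ⟨3 * b, by omega, (palRed02 (le_refl b)).mpr hallb, ?_, ?_, ?_⟩
          · rw [PP_mul3, PP_mul3_add2, hB]
            have : e2 (1 : Fin 10) = 1 := by decide
            omega
          · rw [hnm1, psiFix1, psiFix0, hB]; decide
          · intro _ _
            refine ⟨3 * b, by omega, allb_up (a := b) (b := b + 1) (by omega) (by omega) hallb,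
              ?_, ?_⟩
            · rw [PP_mul3, PP_mul3_add2, hB]
              have : e2 (1 : Fin 10) = 1 := by decide
              omega
            · rw [psiFix0, hB]; decide
        by_cases hDS : psiFix b = 3 ∨ psiFix b = 9
        · -- bab : m = 3b - 1
          have hb1 : b ≠ 0 := by
            intro h
            rw [h, psiFix_zero] at hDS
            exact absurd hDS (by decide)
          have hadj := ADJ_holds (b - 1)
          rw [show b - 1 + 1 = b by omega] at hadj
          have hzS : psiFix (b - 1) = 8 := by
            have : ∀ z y : Fin 10, ADJ z y → (y = 3 ∨ y = 9) → z = 8 := by decide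
            exact this _ _ hadj hDS
          have hswb : sW (b - 1) = true := by rw [sW_eq_sval, hzS]; rfl
          have hPPb : PP b = PP (b - 1) + codeC (psiFix (b - 1)) := by
            conv_lhs => rw [show b = (b - 1) + 1 by omega]
            exact PP_succ (b - 1)
          have hPal : Pal (3 * (b - 1) + 2) (3 * b + 2) := by
            have := (palRed22bab (b - 1)).mpr hswb
            rwa [show 3 * (b - 1 + 1) + 2 = 3 * b + 2 by omega] at this
          refine ⟨3 * (b - 1) + 2, by omega, hPal, ?_, ?_, ?_⟩
          · rw [PP_mul3_add2, PP_mul3_add2, hzS]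
            rw [hzS] at hPPb
            have : ∀ y : Fin 10, (y = 3 ∨ y = 9) → e2 y = 1 := by decide
            have h9 := this _ hDS
            have c8 : codeC (8 : Fin 10) = 0 := by decide
            have e8 : e2 (8 : Fin 10) = 0 := by decide
            omega
          · rw [hnm1, psiFix1, psiFix2, hzS]
            have : ∀ y : Fin 10, (y = 3 ∨ y = 9) → LamB (psiL y 1) (psiL (8 : Fin 10) 2) = true := by
              decide
            exact this _ hDS
          · rw [hnm1, psiFix1, psiFix2, hzS]
            intro _ hx
            exact absurd hx (by decide)
        · -- remaining: y ∈ {Ā, B̄, C̄, D̄, S}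
          have hy5 : psiFix b = 4 ∨ psiFix b = 5 ∨ psiFix b = 6 ∨ psiFix b = 7 ∨
              psiFix b = 8 := by
            by_contra hcon
            push_neg at hcon
            obtain ⟨c1, c2, c3, c4, c5⟩ := hcon
            have : ∀ y : Fin 10, y ≠ 4 → y ≠ 5 → y ≠ 6 → y ≠ 7 → y ≠ 8 →
                ((y = 0 ∨ y = 2) ∨ y = 1 ∨ (y = 3 ∨ y = 9)) := by decide
            rcases this _ c1 c2 c3 c4 c5 with h | h | h
            · exact hAC h
            · exact hB h
            · exact hDS h
          obtain ⟨mh, hmh, hPal, hPP, hLam, hV⟩ := ih (b + 1) (by omega) (by omega)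
          rw [show b + 1 - 1 = b by omega] at hLam hV
          have hPPb : PP (b + 1) = PP b + codeC (psiFix b) := PP_succ b
          by_cases hS : psiFix b = 8 ∧ psiFix mh = 1
          · -- s3
            obtain ⟨a, ha1, ha2, ha3, ha4⟩ := hV hS.1 hS.2
            refine ⟨3 * a, by omega, (palRed02 (by omega)).mpr ha2, ?_, ?_, ?_⟩
            · rw [PP_mul3, PP_mul3_add2, hS.1]
              rw [hS.1] at hPPb
              have c8 : codeC (8 : Fin 10) = 0 := by decide
              have e8 : e2 (8 : Fin 10) = 0 := by decide
              omega
            · rw [hnm1, psiFix1, psiFix0, ha4, hS.1]; decide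
            · intro _ _
              refine ⟨3 * a, by omega, allb_up (a := a) (b := b + 1) (by omega) (by omega) ha2,
                ?_, ?_⟩
              · rw [PP_mul3, PP_mul3_add2, hS.1]
                rw [hS.1] at hPPb
                have c8 : codeC (8 : Fin 10) = 0 := by decide
                have e8 : e2 (8 : Fin 10) = 0 := by decide
                omega
              · rw [psiFix0, ha4]; decide
          · -- s2 : m = 3 mh + 1
            have hkey : e1 (psiFix mh) = e2 (psiFix b) - codeC (psiFix b) := by
              have : ∀ y x : Fin 10,
                  (y = 4 ∨ y = 5 ∨ y = 6 ∨ y = 7 ∨ y = 8) → LamB y x = true →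
                  ¬(y = 8 ∧ x = 1) → e1 x = e2 y - codeC y := by decide
              exact this _ _ hy5 hLam hS
            refine ⟨3 * mh + 1, by omega, (palRed12 (by omega)).mpr hPal, ?_, ?_, ?_⟩
            · rw [PP_mul3_add1, PP_mul3_add2]
              omega
            · rw [hnm1, psiFix1, psiFix1]
              have : ∀ y x : Fin 10,
                  (y = 4 ∨ y = 5 ∨ y = 6 ∨ y = 7 ∨ y = 8) → LamB y x = true →
                  ¬(y = 8 ∧ x = 1) → LamB (psiL y 1) (psiL x 1) = true := by decide
              exact this _ _ hy5 hLam hS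
            · rw [hnm1, psiFix1, psiFix1]
              intro hz hx
              exfalso
              have : ∀ y x : Fin 10,
                  (y = 4 ∨ y = 5 ∨ y = 6 ∨ y = 7 ∨ y = 8) → LamB y x = true →
                  ¬(y = 8 ∧ x = 1) → psiL y 1 = 8 → psiL x 1 ≠ 1 := by decide
              exact this _ _ hy5 hLam hS hz hx

end DpAuto
namespace DpAuto

def fac (m n : ℕ) : List Bool := (List.range (n - m)).map (fun t => sW (m + t))

lemma length_fac (m n : ℕ) : (fac m n).length = n - m := by simp [fac]

lemma length_sPrefix (n : ℕ) : (sPrefix n).length = n := by simp [sPrefix]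

lemma sPrefix_succ (n : ℕ) : sPrefix (n + 1) = sPrefix n ++ [sW n] := by
  simp [sPrefix, List.range_succ]

lemma fac_succ {m n : ℕ} (h : m ≤ n) : fac m (n + 1) = fac m n ++ [sW n] := by
  rw [fac, show n + 1 - m = (n - m) + 1 by omega, List.range_succ, List.map_append]
  congr 1
  simp only [List.map_cons, List.map_nil]
  rw [show m + (n - m) = n by omega]

lemma sPrefix_split {m n : ℕ} (h : m ≤ n) : sPrefix n = sPrefix m ++ fac m n := by
  induction n with
  | zero =>
    have : m = 0 := by omega
    subst this
    rfl
  | succ n ihn =>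
    rcases eq_or_lt_of_le h with h1 | h1
    · rw [← h1]
      have : fac m m = [] := by simp [fac]
      rw [this, List.append_nil]
    · have hm : m ≤ n := by omega
      rw [sPrefix_succ, ihn hm, List.append_assoc, fac_succ hm]

lemma getElem_fac (m n i : ℕ) (h : i < (fac m n).length) : (fac m n)[i] = sW (m + i) := by
  simp [fac]

lemma isPal_fac {m n : ℕ} (h : m ≤ n) : IsPal (fac m n) ↔ Pal m n := by
  unfold IsPal
  constructor
  · intro H i hi1 hi2
    have hlen : (fac m n).length = n - m := length_fac m n
    have hidx : i - m < (fac m n).length := by omega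
    have h1' : i - m < (fac m n).reverse.length := by rw [List.length_reverse]; omega
    have e1 : (fac m n).reverse[i - m]'h1' = (fac m n)[i - m]'hidx := List.getElem_of_eq H _
    have e2 : (fac m n).reverse[i - m]'h1' =
        (fac m n)[(fac m n).length - 1 - (i - m)]'(by omega) := List.getElem_reverse h1'
    rw [getElem_fac] at e1 e2
    rw [show m + (i - m) = i by omega] at e1
    rw [show m + ((fac m n).length - 1 - (i - m)) = m + n - 1 - i by omega] at e2
    rw [← e1, e2]
  · intro H
    apply List.ext_getElem
    · rw [List.length_reverse]
    · intro i h1 h2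
      have hlen : (fac m n).length = n - m := length_fac m n
      rw [List.getElem_reverse h1]
      rw [getElem_fac, getElem_fac]
      rw [show m + ((fac m n).length - 1 - i) = m + n - 1 - (m + i) by omega]
      exact (H (m + i) (by omega) (by omega)).symm

/-! ### PL basics -/

lemma flatten_singletons {α : Type*} (w : List α) : (w.map (fun c => [c])).flatten = w := by
  induction w with
  | nil => rfl
  | cons c t ih => simp [ih]

lemma PL_nonempty {α : Type*} (w : List α) :
    {k | ∃ l : List (List α), l.length = k ∧ (∀ p ∈ l, IsPal p) ∧ l.flatten = w}.Nonempty := by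
  refine ⟨w.length, w.map (fun c => [c]), by simp, ?_, flatten_singletons w⟩
  intro p hp
  simp only [List.mem_map] at hp
  obtain ⟨c, _, rfl⟩ := hp
  rfl

lemma PL_le {α : Type*} (w : List α) (l : List (List α)) (hp : ∀ p ∈ l, IsPal p)
    (hf : l.flatten = w) : PL w ≤ l.length :=
  Nat.sInf_le ⟨l, rfl, hp, hf⟩

lemma PL_spec {α : Type*} (w : List α) :
    ∃ l : List (List α), l.length = PL w ∧ (∀ p ∈ l, IsPal p) ∧ l.flatten = w :=
  Nat.sInf_mem (PL_nonempty w)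

lemma pS_zero : pS 0 = 0 := by
  have h := PL_le (sPrefix 0) [] (by simp) rfl
  simpa [pS] using Nat.le_zero.mp h

lemma pal_step_le {m n : ℕ} (h : m < n) (H : Pal m n) : pS n ≤ pS m + 1 := by
  obtain ⟨l, hl, hp, hf⟩ := PL_spec (sPrefix m)
  have key : PL (sPrefix n) ≤ (l ++ [fac m n]).length := by
    apply PL_le
    · intro p hp'
      rcases List.mem_append.mp hp' with h' | h'
      · exact hp p h'
      · rw [List.mem_singleton.mp h']
        exact (isPal_fac (le_of_lt h)).mpr H
    · rw [List.flatten_append, hf]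
      simp only [List.flatten_cons, List.flatten_nil, List.append_nil]
      exact (sPrefix_split (le_of_lt h)).symm
  rw [List.length_append] at key
  simpa [pS, hl] using key

lemma flatten_filter_nonempty {α : Type*} (l : List (List α)) :
    (l.filter (fun p => !p.isEmpty)).flatten = l.flatten := by
  induction l with
  | nil => rfl
  | cons p t ih =>
    by_cases hp : p.isEmpty
    · have : p = [] := List.isEmpty_iff.mp hp
      subst this
      simpa using ih
    · rw [List.filter_cons_of_pos (by simp [hp]), List.flatten_cons, List.flatten_cons, ih]

lemma pal_step_ge {n : ℕ} (h : 1 ≤ n) : ∃ m, m < n ∧ Pal m n ∧ pS m + 1 ≤ pS n := by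
  obtain ⟨l, hl, hp, hf⟩ := PL_spec (sPrefix n)
  set l' := l.filter (fun p => !p.isEmpty) with hl'
  have hf' : l'.flatten = sPrefix n := by rw [hl', flatten_filter_nonempty, hf]
  have hne : l' ≠ [] := by
    intro hcon
    rw [hcon] at hf'
    have := congrArg List.length hf'
    rw [length_sPrefix] at this
    simp at this
    omega
  have hsplit := (List.dropLast_append_getLast hne).symm
  set p := l'.getLast hne with hpdef
  have hpmem : p ∈ l' := List.getLast_mem hne
  have hpl : p ∈ l ∧ ¬p.isEmpty := by
    have := List.mem_filter.mp hpmem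
    simpa using this
  have hppal : IsPal p := hp p hpl.1
  have hpne : p ≠ [] := by
    intro hcon
    exact hpl.2 (by simp [hcon])
  have hflat2 : l'.dropLast.flatten ++ p = sPrefix n := by
    rw [← hf']
    conv_rhs => rw [hsplit]
    rw [List.flatten_append]
    simp
  have hplen : p.length ≤ n := by
    have := congrArg List.length hflat2
    rw [List.length_append, length_sPrefix] at this
    omega
  set m := n - p.length with hm
  have hmn : m < n := by
    have : p.length ≥ 1 := by
      rcases p with _ | ⟨c, t⟩
      · exact absurd rfl hpne
      · simp
    omega
  have hsp := sPrefix_split (show m ≤ n by omega)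
  have hinj : l'.dropLast.flatten = sPrefix m ∧ p = fac m n := by
    apply List.append_inj
    · rw [hflat2, hsp]
    · have := congrArg List.length hflat2
      rw [List.length_append, length_sPrefix] at this
      rw [length_sPrefix]
      omega
  refine ⟨m, hmn, (isPal_fac (le_of_lt hmn)).mp (hinj.2 ▸ hppal), ?_⟩
  have h1 : pS m ≤ l'.dropLast.length := PL_le _ _ (fun q hq => hp q
    (List.mem_filter.mp (List.mem_of_mem_dropLast hq)).1) hinj.1
  have h2 : l'.dropLast.length = l'.length - 1 := by
    rw [List.length_dropLast]
  have h3 : l'.length ≤ l.length := List.length_filter_le _ _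
  have h4 : l'.length ≥ 1 := by
    rcases l' with _ | ⟨q, t⟩
    · exact absurd rfl hne
    · simp
  have h5 : l.length = pS n := hl
  omega

lemma pS_eq_PP : ∀ n, (pS n : ℤ) = PP n := by
  intro n
  induction n using Nat.strong_induction_on with
  | _ n ih =>
    rcases Nat.eq_zero_or_pos n with rfl | hn
    · rw [pS_zero]; rfl
    · obtain ⟨mu, hmu, hmuPal, hmuPP, _, _⟩ := Uclaim n hn
      obtain ⟨ml, hml, hmlPal, hmlpS⟩ := pal_step_ge hn
      have hub : pS n ≤ pS mu + 1 := pal_step_le hmu hmuPal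
      have hlb := pal_lower hml hmlPal
      have ihu := ih mu hmu
      have ihl := ih ml hml
      have hcast1 : (pS n : ℤ) ≤ (pS mu : ℤ) + 1 := by exact_mod_cast hub
      have hcast2 : (pS ml : ℤ) + 1 ≤ (pS n : ℤ) := by exact_mod_cast hmlpS
      omega

end DpAuto

/-- The sequence d_p of first differences of the prefix palindromic length of
the Sierpinski word is c applied to the fixed point ψ^∞(A). -/
theorem dp_automatic (n : ℕ) :
    (pS (n + 1) : ℤ) - (pS n : ℤ) = codeC (psiFix n) := by
  rw [DpAuto.pS_eq_PP, DpAuto.pS_eq_PP, DpAuto.PP_succ]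
  ring
end

section
/- For every k ≥ 1 and 0 ≤ i ≤ 3^(k−1), the prefix of the Sierpinski word of length 3^(k−1) + i, preceded by b^i, forms a palindrome; in particular q(3^(k−1) + i) = 1, where q(n) = min_j PL(b^j s[1..n]). -/
namespace SierpAux

def Sk (e : ℕ) : List Bool := phi^[e] [false]

lemma phi_append (x y : List Bool) : phi (x ++ y) = phi x ++ phi y := by
  simp [phi]

lemma phi_rep (n : ℕ) : phi (List.replicate n true) = List.replicate (3*n) true := by
  induction n with
  | zero => simp [phi]
  | succ n ih =>
    rw [List.replicate_succ, show phi (true :: List.replicate n true)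
        = [true,true,true] ++ phi (List.replicate n true) from rfl, ih]
    rw [show 3*(n+1) = 3 + 3*n by ring, List.replicate_add]
    rfl

lemma Sk_succ (e : ℕ) : Sk (e+1) = Sk e ++ List.replicate (3^e) true ++ Sk e := by
  induction e with
  | zero => rfl
  | succ e ih =>
    have h1 : Sk (e+2) = phi (Sk (e+1)) := Function.iterate_succ_apply' phi (e+1) [false]
    have h2 : Sk (e+1) = phi (Sk e) := Function.iterate_succ_apply' phi e [false]
    rw [h1, ih, phi_append, phi_append, phi_rep, ← h2, ih]
    congr 2
    rw [pow_succ]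
    congr 1
    ring

lemma Sk_length (e : ℕ) : (Sk e).length = 3 ^ e := by
  induction e with
  | zero => rfl
  | succ e ih =>
    rw [Sk_succ]
    simp [ih, pow_succ]
    ring

lemma Sk_pal (e : ℕ) : (Sk e).reverse = Sk e := by
  induction e with
  | zero => rfl
  | succ e ih => rw [Sk_succ]; simp [ih]

lemma Sk_prefix {e e' : ℕ} (h : e ≤ e') : Sk e <+: Sk e' := by
  induction e', h using Nat.le_induction with
  | base => exact List.prefix_rfl
  | succ e' _ ih =>
    refine ih.trans ?_
    rw [Sk_succ]
    simp

lemma getD_prefix {l1 l2 : List Bool} {t : ℕ} (h : l1 <+: l2) (ht : t < l1.length) :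
    l2.getD t true = l1.getD t true := by
  obtain ⟨r, rfl⟩ := h
  rw [List.getD_append _ _ _ _ ht]

lemma sW_eq {e t : ℕ} (ht : t < 3 ^ e) : sW t = (Sk e).getD t true := by
  have ht' : t < 3 ^ (t+1) := lt_of_lt_of_le (Nat.lt_succ_self t) (Nat.le_of_lt (Nat.lt_pow_self (by norm_num : 1 < 3)))
  show (Sk (t+1)).getD t true = (Sk e).getD t true
  rcases le_total (t+1) e with h | h
  · rw [getD_prefix (Sk_prefix h) (by rw [Sk_length]; exact ht')]
  · rw [getD_prefix (Sk_prefix h) (by rw [Sk_length]; exact ht)]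

lemma sPrefix_eq {e n : ℕ} (hn : n ≤ 3 ^ e) : sPrefix n = (Sk e).take n := by
  apply List.ext_getElem
  · simp [sPrefix, Sk_length, Nat.min_eq_left hn]
  · intro t h1 h2
    simp only [sPrefix, List.getElem_map, List.getElem_range, List.getElem_take]
    have ht : t < n := by simpa [sPrefix] using h1
    have ht3 : t < 3 ^ e := lt_of_lt_of_le ht hn
    rw [sW_eq ht3]
    rw [List.getD_eq_getElem _ _ (by rw [Sk_length]; exact ht3)]

lemma key_word (k i : ℕ) (hk : 1 ≤ k) (hi : i ≤ 3 ^ (k - 1)) :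
    sPrefix (3 ^ (k - 1) + i) = Sk (k-1) ++ List.replicate i true := by
  obtain ⟨e, rfl⟩ : ∃ e, k = e + 1 := ⟨k - 1, (Nat.succ_pred_eq_of_pos hk).symm⟩
  simp only [Nat.add_sub_cancel] at hi ⊢
  have hle : 3 ^ e + i ≤ 3 ^ (e+1) := by
    rw [pow_succ]
    nlinarith [pow_pos (show 0 < 3 by norm_num) e]
  rw [sPrefix_eq hle, Sk_succ, List.append_assoc]
  rw [show 3 ^ e + i = (Sk e).length + i by rw [Sk_length]]
  rw [List.take_append]
  rw [List.take_append_of_le_length (by simpa using hi), List.take_replicate,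
    Nat.add_sub_cancel_left, Nat.min_eq_left hi, List.take_of_length_le (Nat.le_add_right _ _)]

lemma flatten_map_singleton {α : Type*} (w : List α) :
    (w.map (fun c => [c])).flatten = w := by
  induction w with
  | nil => simp
  | cons a w ih => simp [ih]

lemma PL_pos {α : Type*} {w : List α} (hw : w ≠ []) : 1 ≤ PL w := by
  unfold PL
  rw [Nat.one_le_iff_ne_zero]
  intro h0
  rcases Nat.sInf_eq_zero.mp h0 with hmem | hempty
  · obtain ⟨l, hl, -, hfl⟩ := hmem
    rw [List.length_eq_zero_iff] at hl
    subst hl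
    exact hw (by simpa using hfl.symm)
  · exact absurd hempty (Set.nonempty_iff_ne_empty.mp
      ⟨w.length, w.map (fun c => [c]), by simp, by simp [IsPal],
        flatten_map_singleton w⟩)

lemma PL_pal_eq_one {α : Type*} {w : List α} (h : IsPal w) (hw : w ≠ []) : PL w = 1 := by
  refine le_antisymm ?_ (PL_pos hw)
  exact Nat.sInf_le ⟨[w], rfl, by simpa using h, by simp⟩

end SierpAux

open SierpAux in
/-- For every k ≥ 1 and 0 ≤ i ≤ 3^(k−1), the word bⁱ s[1..3^(k−1)+i] is a
palindrome; in particular q(3^(k−1) + i) = 1. -/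
theorem q_eq_one_on_middle_range (k i : ℕ) (hk : 1 ≤ k) (hi : i ≤ 3 ^ (k - 1)) :
    IsPal (List.replicate i true ++ sPrefix (3 ^ (k - 1) + i)) ∧
    qS (3 ^ (k - 1) + i) = 1 := by
  set n := 3 ^ (k - 1) + i with hn
  have hw : List.replicate i true ++ sPrefix n
      = List.replicate i true ++ (Sk (k-1) ++ List.replicate i true) := by
    rw [key_word k i hk hi]
  have hpal : IsPal (List.replicate i true ++ sPrefix n) := by
    rw [hw]
    unfold IsPal
    simp [Sk_pal]
  have hne : sPrefix n ≠ [] := by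
    have : (sPrefix n).length = n := by simp [sPrefix]
    intro h
    rw [h] at this
    simp at this
    have := pow_pos (show 0 < 3 by norm_num) (k-1)
    omega
  have hne' : List.replicate i true ++ sPrefix n ≠ [] := by simp [hne]
  refine ⟨hpal, ?_⟩
  unfold qS
  apply le_antisymm
  · exact Nat.sInf_le ⟨i, PL_pal_eq_one hpal hne'⟩
  · refine le_csInf ⟨qj 0 n, ⟨0, rfl⟩⟩ ?_
    rintro b ⟨j, rfl⟩
    exact PL_pos (by simp [hne])
end
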